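/- arXiv:1711.00195 — 6 statements merged into one kernel-verified Lean document; each statement's English description precedes it below -/
import Mathlib

section
/- Let m ∈ ℝ. The tortoise-coordinate function r_*(r) = r + 2m·log(r − 2m) is defined and strictly increasing on the interval (max(2m,0), ∞) and tends to +∞ as r → ∞. Consequently there is R₀ > 0 such that for every ρ > R₀ there is a unique F(ρ) ∈ (max(2m,0), ∞) with r_*(F(ρ)) = ρ, and the inverse function satisfies the asymptotics F(ρ) = ρ − 2m·log ρ + O(ρ⁻¹ log ρ) as ρ → ∞; that is, there exist C > 0 and ρ₁ > R₀ such that |F(ρ) − ρ + 2m·log ρ| ≤ C·ρ⁻¹·log ρ for all ρ ≥ ρ₁. -/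
open Set Filter

private lemma abs_log_sub_log_le' {x y c : ℝ} (hc : 0 < c) (hx : c ≤ x) (hy : c ≤ y)
    (h : y ≤ x) : |Real.log x - Real.log y| ≤ |x - y| / c := by
  have hy0 : 0 < y := hc.trans_le hy
  have hx0 : 0 < x := hc.trans_le hx
  rw [abs_of_nonneg (sub_nonneg.2 (Real.log_le_log hy0 h)),
      abs_of_nonneg (sub_nonneg.2 h)]
  have h1 : Real.log x - Real.log y = Real.log (x / y) :=
    (Real.log_div hx0.ne' hy0.ne').symm
  have h2 : Real.log (x / y) ≤ x / y - 1 := Real.log_le_sub_one_of_pos (div_pos hx0 hy0)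
  have h3 : x / y - 1 = (x - y) / y := by field_simp
  have h4 : (x - y) / y ≤ (x - y) / c := by gcongr
  linarith

private lemma abs_log_sub_log_le {x y c : ℝ} (hc : 0 < c) (hx : c ≤ x) (hy : c ≤ y) :
    |Real.log x - Real.log y| ≤ |x - y| / c := by
  rcases le_total y x with h | h
  · exact abs_log_sub_log_le' hc hx hy h
  · rw [abs_sub_comm, abs_sub_comm x y]; exact abs_log_sub_log_le' hc hy hx h

/-- For the mass-`m` Schwarzschild metric, the tortoise coordinate
`r_*(r) = r + 2 m log (r - 2 m)` is strictly increasing on `(max(2m,0), ∞)` and tends to `+∞`;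
consequently there is `R₀ > 0` such that for every `ρ > R₀` there is a unique
`F ρ ∈ (max(2m,0), ∞)` with `r_*(F ρ) = ρ`, and the inverse satisfies
`F ρ = ρ - 2 m log ρ + O(ρ⁻¹ log ρ)` as `ρ → ∞`. -/
theorem tortoise_inverse_asymptotics (m : ℝ) :
    StrictMonoOn (fun r : ℝ => r + 2 * m * Real.log (r - 2 * m)) (Ioi (max (2 * m) 0)) ∧
    Tendsto (fun r : ℝ => r + 2 * m * Real.log (r - 2 * m)) atTop atTop ∧
    ∃ R₀ : ℝ, 0 < R₀ ∧ ∃ F : ℝ → ℝ,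
      (∀ ρ : ℝ, R₀ < ρ →
        F ρ ∈ Ioi (max (2 * m) 0) ∧
        F ρ + 2 * m * Real.log (F ρ - 2 * m) = ρ ∧
        ∀ r ∈ Ioi (max (2 * m) 0), r + 2 * m * Real.log (r - 2 * m) = ρ → r = F ρ) ∧
      ∃ C : ℝ, 0 < C ∧ ∃ ρ₁ : ℝ, R₀ < ρ₁ ∧ ∀ ρ : ℝ, ρ₁ ≤ ρ →
        |F ρ - ρ + 2 * m * Real.log ρ| ≤ C * ρ⁻¹ * Real.log ρ := by
  set a : ℝ := max (2 * m) 0 with ha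
  set f : ℝ → ℝ := fun r => r + 2 * m * Real.log (r - 2 * m) with hfdef
  -- derivative
  have hderiv : ∀ x ∈ Ioi a, HasDerivAt f (x / (x - 2 * m)) x := by
    intro x hx
    have hx2 : 0 < x - 2 * m := sub_pos.2 (lt_of_le_of_lt (le_max_left _ _) hx)
    have h1 : HasDerivAt (fun r : ℝ => r - 2 * m) 1 x := (hasDerivAt_id x).sub_const _
    have h2 : HasDerivAt (fun r : ℝ => Real.log (r - 2 * m)) (1 / (x - 2 * m)) x := by
      simpa [Function.comp_def] using (Real.hasDerivAt_log hx2.ne').comp x h1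
    have h3 : HasDerivAt f (1 + 2 * m * (1 / (x - 2 * m))) x :=
      (hasDerivAt_id x).add (h2.const_mul (2 * m))
    convert h3 using 1
    field_simp
    ring
  have hcont : ContinuousOn f (Ioi a) :=
    fun x hx => (hderiv x hx).continuousAt.continuousWithinAt
  have hmono : StrictMonoOn f (Ioi a) := by
    apply strictMonoOn_of_deriv_pos (convex_Ioi a) hcont
    intro x hx
    rw [interior_Ioi] at hx
    rw [(hderiv x hx).deriv]
    have hx0 : 0 < x := lt_of_le_of_lt (le_max_right _ _) hx
    have hx2 : 0 < x - 2 * m := sub_pos.2 (lt_of_le_of_lt (le_max_left _ _) hx)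
    positivity
  -- log smallness
  have hlog : ∃ s₀ : ℝ, 1 ≤ s₀ ∧ ∀ s, s₀ ≤ s → |2 * m * Real.log s| ≤ s / 2 := by
    have h := (Real.isLittleO_log_id_atTop.const_mul_left (2 * m)).def
      (by norm_num : (0:ℝ) < 1/2)
    rw [eventually_atTop] at h
    obtain ⟨N, hN⟩ := h
    refine ⟨max N 1, le_max_right _ _, fun s hs => ?_⟩
    have h1 : (1:ℝ) ≤ s := le_trans (le_max_right _ _) hs
    have h2 := hN s (le_trans (le_max_left _ _) hs)
    simp only [Real.norm_eq_abs, id] at h2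
    rw [abs_of_nonneg (by linarith : (0:ℝ) ≤ s)] at h2
    linarith
  obtain ⟨s₀, hs₀1, hs₀⟩ := hlog
  -- tendsto atTop
  have habs2m : 2 * m ≤ 2 * |m| ∧ -(2 * |m|) ≤ 2 * m := by
    constructor <;> linarith [le_abs_self m, neg_abs_le m]
  have htends : Tendsto f atTop atTop := by
    apply tendsto_atTop_mono' atTop
      (show ∀ᶠ r in atTop, r / 2 - |m| ≤ f r from ?_)
    · have h1 : Tendsto (fun r : ℝ => r / 2 - |m|) atTop atTop := by
        apply tendsto_atTop_add_const_right
        exact tendsto_id.atTop_div_const two_pos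
      exact h1
    · filter_upwards [eventually_ge_atTop (s₀ + 2 * |m|)] with r hr
      have hs : s₀ ≤ r - 2 * m := by linarith [habs2m.1]
      have hb := abs_le.mp (hs₀ _ hs)
      have : f r = r + 2 * m * Real.log (r - 2 * m) := rfl
      rw [this]
      have hm : 0 ≤ |m| := abs_nonneg m
      linarith [hb.1, habs2m.1]
  -- base point
  set r₀ : ℝ := s₀ + 2 * |m| + a + 1 with hr₀def
  have ha0 : 0 ≤ a := le_max_right _ _
  have hr₀a : a < r₀ := by
    have := abs_nonneg m; simp only [hr₀def]; linarith
  have hr₀mem : r₀ ∈ Ioi a := hr₀a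
  set R₀ : ℝ := max (f r₀) 1 with hR₀def
  have hR₀pos : (0:ℝ) < R₀ := lt_of_lt_of_le one_pos (le_max_right _ _)
  -- existence of inverse
  have hex : ∀ ρ, R₀ < ρ → ∃ r, r ∈ Ioi a ∧ f r = ρ := by
    intro ρ hρ
    obtain ⟨b, hb⟩ := ((htends.eventually_ge_atTop ρ).and (eventually_ge_atTop r₀)).exists
    have hsub : Icc r₀ b ⊆ Ioi a := fun x hx => lt_of_lt_of_le hr₀a hx.1
    have hIVT := intermediate_value_Icc hb.2 (hcont.mono hsub)
    have hρmem : ρ ∈ Icc (f r₀) (f b) :=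
      ⟨le_of_lt (lt_of_le_of_lt (le_max_left _ _) hρ), hb.1⟩
    obtain ⟨r, hrmem, hrval⟩ := hIVT hρmem
    exact ⟨r, hsub hrmem, hrval⟩
  have hex' : ∀ ρ : ℝ, ∃ r, R₀ < ρ → (r ∈ Ioi a ∧ f r = ρ) := by
    intro ρ
    by_cases h : R₀ < ρ
    · obtain ⟨r, hr⟩ := hex ρ h; exact ⟨r, fun _ => hr⟩
    · exact ⟨0, fun h' => absurd h' h⟩
  choose F hF using hex'
  refine ⟨hmono, htends, R₀, hR₀pos, F, ?_, ?_⟩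
  · intro ρ hρ
    obtain ⟨hmem, hval⟩ := hF ρ hρ
    exact ⟨hmem, hval, fun r hr hfr => hmono.injOn hr hmem (hfr.trans hval.symm)⟩
  · -- asymptotics
    refine ⟨24 * m ^ 2 + 1, by positivity,
      max (max (f r₀ + 1) (R₀ + 1)) (max (8 * |m| + 3) (Real.exp 1)), ?_, ?_⟩
    · calc R₀ < R₀ + 1 := by linarith
        _ ≤ max (f r₀ + 1) (R₀ + 1) := le_max_right _ _
        _ ≤ _ := le_max_left _ _
    · intro ρ hρ
      have hρf : f r₀ + 1 ≤ ρ :=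
        le_trans (le_trans (le_max_left _ _) (le_max_left _ _)) hρ
      have hρR : R₀ < ρ :=
        lt_of_lt_of_le (by linarith : R₀ < R₀ + 1)
          (le_trans (le_trans (le_max_right _ _) (le_max_left _ _)) hρ)
      have hρ3 : 8 * |m| + 3 ≤ ρ :=
        le_trans (le_trans (le_max_left _ _) (le_max_right _ _)) hρ
      have hρe : Real.exp 1 ≤ ρ :=
        le_trans (le_trans (le_max_right _ _) (le_max_right _ _)) hρ
      have hm0 : (0:ℝ) ≤ |m| := abs_nonneg m
      have hρ0 : (0:ℝ) < ρ := by linarith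
      have hlogρ : 1 ≤ Real.log ρ := by
        rw [← Real.log_exp 1]
        exact Real.log_le_log (Real.exp_pos 1) hρe
      obtain ⟨hmem, hval⟩ := hF ρ hρR
      -- F ρ ≥ r₀
      have hFr₀ : r₀ ≤ F ρ := by
        by_contra h
        push_neg at h
        have := hmono hmem hr₀mem h
        rw [hval] at this
        linarith
      set s : ℝ := F ρ - 2 * m with hsdef
      set L : ℝ := Real.log s with hLdef
      have heq : F ρ + 2 * m * L = ρ := hval
      have hFs : F ρ = s + 2 * m := by simp [hsdef]
      have hseq : s = ρ - 2 * m - 2 * m * L := by linarith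
      have hs₀s : s₀ ≤ s := by
        simp only [hsdef]; linarith [habs2m.1]
      have hs1 : (1:ℝ) ≤ s := le_trans hs₀1 hs₀s
      have hL0 : 0 ≤ L := Real.log_nonneg hs1
      have hbnd := abs_le.mp (hs₀ s hs₀s)
      -- lower and upper bounds on s
      have hslow : ρ / 2 ≤ s := by linarith [hbnd.1, habs2m.2]
      have hshigh : s ≤ ρ ^ 2 := by nlinarith [hbnd.2, habs2m.1]
      -- L ≤ 2 log ρ
      have hL2 : L ≤ 2 * Real.log ρ := by
        have h1 : L ≤ Real.log (ρ ^ 2) :=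
          Real.log_le_log (by linarith) hshigh
        rwa [Real.log_pow, Nat.cast_ofNat] at h1
      -- |log ρ - L| bound
      have h5 : |Real.log ρ - L| ≤ |ρ - s| / (ρ / 2) :=
        abs_log_sub_log_le (by linarith) (by linarith) hslow
      have h6 : |ρ - s| ≤ 6 * |m| * Real.log ρ := by
        have h61 : ρ - s = 2 * m + 2 * m * L := by linarith
        rw [h61]
        have h62 : |2 * m + 2 * m * L| ≤ 2 * |m| + 2 * |m| * L := by
          calc |2 * m + 2 * m * L| ≤ |2 * m| + |2 * m * L| := abs_add_le _ _
            _ = 2 * |m| + 2 * |m| * L := by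
                rw [abs_mul, abs_mul, abs_mul, abs_of_nonneg hL0]
                norm_num
        nlinarith
      have h7 : |F ρ - ρ + 2 * m * Real.log ρ| = |2 * m| * |Real.log ρ - L| := by
        rw [← abs_mul]
        congr 1
        have : F ρ = ρ - 2 * m * L := by linarith
        rw [this]; ring
      have h8 : |2 * m| = 2 * |m| := by rw [abs_mul]; norm_num
      have hρs0 : 0 ≤ |ρ - s| := abs_nonneg _
      have h9 : |F ρ - ρ + 2 * m * Real.log ρ| ≤ 2 * |m| * (6 * |m| * Real.log ρ / (ρ / 2)) := by
        rw [h7, h8]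
        have := le_trans h5 (by gcongr : |ρ - s| / (ρ / 2) ≤ 6 * |m| * Real.log ρ / (ρ / 2))
        exact mul_le_mul_of_nonneg_left this (by linarith)
      have h10 : 2 * |m| * (6 * |m| * Real.log ρ / (ρ / 2)) = 24 * m ^ 2 * (ρ⁻¹ * Real.log ρ) := by
        field_simp
        have hmm : |m| * |m| = m ^ 2 := by rw [abs_mul_abs_self]; ring
        linear_combination 24 * hmm
      have h11 : 0 ≤ ρ⁻¹ * Real.log ρ := by positivity
      calc |F ρ - ρ + 2 * m * Real.log ρ| ≤ 24 * m ^ 2 * (ρ⁻¹ * Real.log ρ) := by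
            rw [← h10]; exact h9
        _ ≤ (24 * m ^ 2 + 1) * (ρ⁻¹ * Real.log ρ) := by
            exact mul_le_mul_of_nonneg_right (by linarith [sq_nonneg m]) h11
        _ = (24 * m ^ 2 + 1) * ρ⁻¹ * Real.log ρ := by ring
end

section
/- For every integer d ≥ 1 and every smooth compactly supported function u : (0,∞) → ℝ (i.e. u ∈ C_c^∞((0,∞))), one has the generalized Hardy inequality (∫₀^∞ x^{−2d} |u(x)|² dx)^{1/2} ≤ (2^{2d} d! / (2d)!) · (∫₀^∞ |u^{(d)}(x)|² dx)^{1/2}, where u^{(d)} denotes the d-th derivative of u. -/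
open MeasureTheory Set Function
section
variable {v w : ℝ → ℝ}

lemma hardy_aux_cont (hv : tsupport v ⊆ Set.Ioi 0)
    (hw : Continuous w) (hsw : support w ⊆ tsupport v) (n : ℤ) :
    Continuous fun x => x ^ n * w x := by
  rw [continuous_iff_continuousAt]
  intro x
  by_cases hx : x ∈ tsupport v
  · exact ((continuousAt_zpow₀ x n (Or.inl (ne_of_gt (hv hx)))).mul hw.continuousAt)
  · have hev : (fun y => y ^ n * w y) =ᶠ[nhds x] fun _ => 0 := by
      filter_upwards [(isClosed_tsupport v).isOpen_compl.mem_nhds hx] with y hy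
      have : w y = 0 := by
        by_contra h
        exact hy (hsw (mem_support.2 h))
      simp [this]
    exact (continuousAt_congr hev).2 continuousAt_const

lemma hardy_aux_int (hcs : HasCompactSupport v) (hv : tsupport v ⊆ Set.Ioi 0)
    (hw : Continuous w) (hsw : support w ⊆ tsupport v) (n : ℤ) :
    Integrable (fun x => x ^ n * w x) := by
  refine (hardy_aux_cont hv hw hsw n).integrable_of_hasCompactSupport ?_
  refine HasCompactSupport.intro hcs fun x hx => ?_
  have : w x = 0 := by
    by_contra h
    exact hx (hsw (mem_support.2 h))
  simp [this]

end

lemma hardy_sq_zpow (m : ℤ) (w : ℝ → ℝ) (x : ℝ) :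
    (x ^ m * w x) ^ 2 = x ^ (2 * m) * w x ^ 2 := by
  rcases eq_or_ne x 0 with rfl | hx
  · rcases eq_or_ne m 0 with rfl | hm
    · simp
    · rw [zero_zpow _ hm, zero_zpow _ (by omega : 2 * m ≠ 0)]
      ring
  · rw [two_mul, zpow_add₀ hx]
    ring

lemma hardy_step (k : ℕ) (v : ℝ → ℝ) (hv : ContDiff ℝ (⊤ : ℕ∞) v)
    (hcs : HasCompactSupport v) (hs : tsupport v ⊆ Set.Ioi 0) :
    Real.sqrt (∫ x in Set.Ioi (0:ℝ), x ^ (-2 * (k:ℤ) - 2) * v x ^ 2) ≤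
      (2 / (2 * (k:ℝ) + 1)) *
        Real.sqrt (∫ x in Set.Ioi (0:ℝ), x ^ (-2 * (k:ℤ)) * (deriv v x) ^ 2) := by
  have hd : Differentiable ℝ v := hv.differentiable (by simp)
  have hvc : Continuous v := hd.continuous
  have hdc : Continuous (deriv v) := (contDiff_infty_iff_deriv.mp hv).2.continuous
  have hvz : ∀ x, x ∉ Set.Ioi (0:ℝ) → v x = 0 := fun x hx =>
    image_eq_zero_of_notMem_tsupport fun h => hx (hs h)
  -- support inclusions
  have hsupp_sq : support (fun x => v x ^ 2) ⊆ tsupport v := fun x hx => by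
    have : v x ≠ 0 := by intro h; apply hx; simp [h]
    exact subset_tsupport v this
  have hsupp_mul : support (fun x => v x * deriv v x) ⊆ tsupport v := fun x hx => by
    have : v x ≠ 0 := by intro h; apply hx; simp [h]
    exact subset_tsupport v this
  have hsupp_v : support v ⊆ tsupport v := subset_tsupport v
  have hsupp_dv : support (deriv v) ⊆ tsupport v := support_deriv_subset
  have hsupp_dsq : support (fun x => deriv v x ^ 2) ⊆ tsupport v := fun x hx => by
    have : deriv v x ≠ 0 := by intro h; apply hx; simp [h]
    exact hsupp_dv (mem_support.2 this)
  -- abbreviations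
  set A := ∫ x in Set.Ioi (0:ℝ), x ^ (-2 * (k:ℤ) - 2) * v x ^ 2 with hA
  set B := ∫ x in Set.Ioi (0:ℝ), x ^ (-2 * (k:ℤ)) * (deriv v x) ^ 2 with hB
  have hA0 : 0 ≤ A := setIntegral_nonneg measurableSet_Ioi fun x hx => by
    have hx' : (0:ℝ) < x := hx
    positivity
  have hB0 : 0 ≤ B := setIntegral_nonneg measurableSet_Ioi fun x hx => by
    have hx' : (0:ℝ) < x := hx
    positivity
  -- integration by parts
  set F : ℝ → ℝ := fun x => x ^ (-2 * (k:ℤ) - 1) * v x ^ 2 with hF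
  set G : ℝ → ℝ := fun x =>
    (-(2 * (k:ℝ) + 1)) * (x ^ (-2 * (k:ℤ) - 2) * v x ^ 2) +
      2 * (x ^ (-2 * (k:ℤ) - 1) * (v x * deriv v x)) with hG
  have hderiv : ∀ x : ℝ, HasDerivAt F (G x) x := by
    intro x
    by_cases hx : x ∈ tsupport v
    · have hx0 : x ≠ 0 := ne_of_gt (hs hx)
      have h1 := hasDerivAt_zpow (-2 * (k:ℤ) - 1) x (Or.inl hx0)
      have h2 : HasDerivAt (fun y => v y ^ 2) (2 * v x ^ 1 * deriv v x) x := by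
        simpa using ((hd x).hasDerivAt).fun_pow 2
      have h3 : HasDerivAt (fun i => i ^ (-2 * (k:ℤ) - 1) * v i ^ 2) _ x := h1.fun_mul h2
      convert h3 using 1
      have hexp : -2 * (k:ℤ) - 1 - 1 = -2 * (k:ℤ) - 2 := by ring
      rw [hexp]
      push_cast
      ring
    · have hev : F =ᶠ[nhds x] fun _ => 0 := by
        filter_upwards [(isClosed_tsupport v).isOpen_compl.mem_nhds hx] with y hy
        have : v y = 0 := image_eq_zero_of_notMem_tsupport hy
        simp [hF, this]
      have hvx : v x = 0 := image_eq_zero_of_notMem_tsupport hx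
      have h0 : HasDerivAt F 0 x := (hasDerivAt_const x (0:ℝ)).congr_of_eventuallyEq hev
      convert h0 using 1
      simp [hG, hvx]
  have hint1 : Integrable (fun x => x ^ (-2 * (k:ℤ) - 2) * v x ^ 2) :=
    hardy_aux_int hcs hs (hvc.pow 2) hsupp_sq _
  have hint2 : Integrable (fun x => x ^ (-2 * (k:ℤ) - 1) * (v x * deriv v x)) :=
    hardy_aux_int hcs hs (hvc.mul hdc) hsupp_mul _
  have hintB : Integrable (fun x => x ^ (-2 * (k:ℤ)) * deriv v x ^ 2) :=
    hardy_aux_int hcs hs (hdc.pow 2) hsupp_dsq _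
  have hGint : IntegrableOn G (Set.Ioi (0:ℝ)) := by
    exact ((hint1.const_mul _).add (hint2.const_mul 2)).integrableOn
  have hFtop : Filter.Tendsto F Filter.atTop (nhds 0) := by
    have hFcs : HasCompactSupport F := by
      refine HasCompactSupport.intro hcs fun x hx => ?_
      have : v x = 0 := image_eq_zero_of_notMem_tsupport hx
      simp [hF, this]
    rw [hasCompactSupport_iff_eventuallyEq, Filter.coclosedCompact_eq_cocompact] at hFcs
    exact hFcs.filter_mono atTop_le_cocompact |>.tendsto
  have hIBP : ∫ x in Set.Ioi (0:ℝ), G x = 0 - F 0 :=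
    MeasureTheory.integral_Ioi_of_hasDerivAt_of_tendsto' (fun x _ => hderiv x) hGint hFtop
  have hF0 : F 0 = 0 := by
    have h00 : v 0 = 0 := hvz 0 (by simp)
    simp [hF, h00]
  rw [hF0, sub_zero] at hIBP
  set I := ∫ x in Set.Ioi (0:ℝ), x ^ (-2 * (k:ℤ) - 1) * (v x * deriv v x) with hI
  have hsplit : (-(2 * (k:ℝ) + 1)) * A + 2 * I = 0 := by
    rw [hA, hI, ← integral_const_mul, ← integral_const_mul,
      ← integral_add ((hint1.const_mul _).integrableOn) ((hint2.const_mul 2).integrableOn)]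
    exact hIBP
  -- Cauchy-Schwarz
  set f : ℝ → ℝ := fun x => x ^ (-(k:ℤ) - 1) * v x with hf
  set g : ℝ → ℝ := fun x => x ^ (-(k:ℤ)) * deriv v x with hg
  have hf_cont : Continuous f := hardy_aux_cont hs hvc hsupp_v _
  have hg_cont : Continuous g := hardy_aux_cont hs hdc hsupp_dv _
  have hf_sq : ∀ x : ℝ, f x ^ 2 = x ^ (-2 * (k:ℤ) - 2) * v x ^ 2 := by
    intro x
    rw [hf]
    simp only []
    rw [hardy_sq_zpow, show 2 * (-(k:ℤ) - 1) = -2 * (k:ℤ) - 2 by ring]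
  have hg_sq : ∀ x : ℝ, g x ^ 2 = x ^ (-2 * (k:ℤ)) * deriv v x ^ 2 := by
    intro x
    rw [hg]
    simp only []
    rw [hardy_sq_zpow, show 2 * (-(k:ℤ)) = -2 * (k:ℤ) by ring]
  have hfg : ∀ x : ℝ, f x * g x = x ^ (-2 * (k:ℤ) - 1) * (v x * deriv v x) := by
    intro x
    rcases eq_or_ne x 0 with rfl | hx
    · have e1 : f 0 = 0 := by
        rw [hf]
        show (0:ℝ) ^ (-(k:ℤ) - 1) * v 0 = 0
        rw [zero_zpow _ (by omega : -(k:ℤ) - 1 ≠ 0), zero_mul]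
      have e2 : (0:ℝ) ^ (-2 * (k:ℤ) - 1) = 0 := zero_zpow _ (by omega)
      rw [e1, e2, zero_mul, zero_mul]
    · rw [hf, hg, show -2 * (k:ℤ) - 1 = (-(k:ℤ) - 1) + -(k:ℤ) by ring, zpow_add₀ hx]
      ring
  have hfg_int : Integrable (fun x => f x * g x) := by
    refine hint2.congr ?_
    filter_upwards with x
    exact (hfg x).symm
  have habs_int : Integrable (fun x => |f x| * |g x|) := by
    have := hfg_int.abs
    refine this.congr ?_
    filter_upwards with x
    rw [abs_mul]
  have hmemf : MemLp (fun x => |f x|) (ENNReal.ofReal 2) (volume.restrict (Set.Ioi (0:ℝ))) := by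
    rw [show ENNReal.ofReal (2:ℝ) = 2 by norm_num]
    refine (memLp_two_iff_integrable_sq ?_).2 ?_
    · exact (hf_cont.abs.aestronglyMeasurable).restrict
    · refine (hint1.integrableOn.congr_fun ?_ measurableSet_Ioi)
      intro x _
      exact ((sq_abs (f x)).trans (hf_sq x)).symm
  have hmemg : MemLp (fun x => |g x|) (ENNReal.ofReal 2) (volume.restrict (Set.Ioi (0:ℝ))) := by
    rw [show ENNReal.ofReal (2:ℝ) = 2 by norm_num]
    refine (memLp_two_iff_integrable_sq ?_).2 ?_
    · exact (hg_cont.abs.aestronglyMeasurable).restrict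
    · refine (hintB.integrableOn.congr_fun ?_ measurableSet_Ioi)
      intro x _
      exact ((sq_abs (g x)).trans (hg_sq x)).symm
  have hconj : Real.HolderConjugate 2 2 := Real.HolderConjugate.two_two
  have hCS0 := integral_mul_le_Lp_mul_Lq_of_nonneg (μ := volume.restrict (Set.Ioi (0:ℝ)))
    hconj (Filter.Eventually.of_forall fun x => abs_nonneg (f x))
    (Filter.Eventually.of_forall fun x => abs_nonneg (g x)) hmemf hmemg
  have hCS : I ≤ Real.sqrt A * Real.sqrt B := by
    have h1 : I = ∫ x in Set.Ioi (0:ℝ), f x * g x := by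
      rw [hI]
      exact (integral_congr_ae (Filter.Eventually.of_forall fun x => (hfg x).symm))
    have h2 : (∫ x in Set.Ioi (0:ℝ), f x * g x) ≤ ∫ x in Set.Ioi (0:ℝ), |f x| * |g x| := by
      refine integral_mono hfg_int.integrableOn habs_int.integrableOn fun x => ?_
      calc f x * g x ≤ |f x * g x| := le_abs_self _
        _ = |f x| * |g x| := abs_mul _ _
    have h3 : (∫ x in Set.Ioi (0:ℝ), |f x| ^ (2:ℝ)) = A := by
      rw [hA]
      refine integral_congr_ae (Filter.Eventually.of_forall fun x => ?_)
      have e : |f x| ^ (2:ℝ) = |f x| ^ (2:ℕ) := by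
        rw [← Real.rpow_natCast (|f x|) 2]; norm_num
      show |f x| ^ (2:ℝ) = x ^ (-2 * (k:ℤ) - 2) * v x ^ 2
      rw [e, sq_abs]
      exact hf_sq x
    have h4 : (∫ x in Set.Ioi (0:ℝ), |g x| ^ (2:ℝ)) = B := by
      rw [hB]
      refine integral_congr_ae (Filter.Eventually.of_forall fun x => ?_)
      have e : |g x| ^ (2:ℝ) = |g x| ^ (2:ℕ) := by
        rw [← Real.rpow_natCast (|g x|) 2]; norm_num
      show |g x| ^ (2:ℝ) = x ^ (-2 * (k:ℤ)) * deriv v x ^ 2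
      rw [e, sq_abs]
      exact hg_sq x
    calc I = ∫ x in Set.Ioi (0:ℝ), f x * g x := h1
      _ ≤ ∫ x in Set.Ioi (0:ℝ), |f x| * |g x| := h2
      _ ≤ (∫ x in Set.Ioi (0:ℝ), |f x| ^ (2:ℝ)) ^ (1/(2:ℝ)) *
          (∫ x in Set.Ioi (0:ℝ), |g x| ^ (2:ℝ)) ^ (1/(2:ℝ)) := hCS0
      _ = Real.sqrt A * Real.sqrt B := by
          rw [h3, h4, Real.sqrt_eq_rpow, Real.sqrt_eq_rpow]
  -- conclude
  have hkey : (2 * (k:ℝ) + 1) * A ≤ 2 * (Real.sqrt A * Real.sqrt B) := by nlinarith [hCS, hsplit]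
  have hsA : 0 ≤ Real.sqrt A := Real.sqrt_nonneg A
  have hsB : 0 ≤ Real.sqrt B := Real.sqrt_nonneg B
  rcases eq_or_lt_of_le hsA with hA0' | hA0'
  · rw [← hA0']
    positivity
  · have hAs : A = Real.sqrt A * Real.sqrt A := (Real.mul_self_sqrt hA0).symm
    have h5 : (2 * (k:ℝ) + 1) * Real.sqrt A ≤ 2 * Real.sqrt B := by
      have h6 : (2 * (k:ℝ) + 1) * (Real.sqrt A * Real.sqrt A) ≤ 2 * (Real.sqrt A * Real.sqrt B) := by
        rw [← hAs]; exact hkey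
      nlinarith [hA0']
    rw [div_mul_eq_mul_div, le_div_iff₀ (by positivity : (0:ℝ) < 2 * (k:ℝ) + 1)]
    nlinarith [h5]

lemma hardy_iter (k : ℕ) (v : ℝ → ℝ) (hv : ContDiff ℝ (⊤ : ℕ∞) v)
    (hcs : HasCompactSupport v) (hs : tsupport v ⊆ Set.Ioi 0) :
    Real.sqrt (∫ x in Set.Ioi (0:ℝ), x ^ (-2 * (k:ℤ)) * v x ^ 2) ≤
      (2 ^ (2 * k) * (Nat.factorial k) / (Nat.factorial (2 * k)) : ℝ) *
        Real.sqrt (∫ x in Set.Ioi (0:ℝ), (iteratedDeriv k v x) ^ 2) := by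
  induction k generalizing v with
  | zero => norm_num [iteratedDeriv_zero]
  | succ k ih =>
    have hstep := hardy_step k v hv hcs hs
    have hdv : ContDiff ℝ (⊤ : ℕ∞) (deriv v) := (contDiff_infty_iff_deriv.mp hv).2
    have hcs' : HasCompactSupport (deriv v) := hcs.deriv
    have hs' : tsupport (deriv v) ⊆ Set.Ioi 0 :=
      (closure_minimal support_deriv_subset (isClosed_tsupport v)).trans hs
    have hih := ih (deriv v) hdv hcs' hs'
    have hcast : (-2 * (((k:ℕ)+1 : ℕ):ℤ)) = -2 * (k:ℤ) - 2 := by push_cast; ring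
    rw [hcast, iteratedDeriv_succ']
    have hfk : ((Nat.factorial (2*k) : ℝ)) ≠ 0 := Nat.cast_ne_zero.2 (Nat.factorial_ne_zero _)
    have hc : ((2:ℝ) ^ (2 * (k+1)) * (Nat.factorial (k+1)) / (Nat.factorial (2 * (k+1))) : ℝ)
        = (2 / (2 * (k:ℝ) + 1)) *
          ((2:ℝ) ^ (2 * k) * (Nat.factorial k) / (Nat.factorial (2 * k))) := by
      have e1 : Nat.factorial (2*(k+1)) = (2*k+2) * ((2*k+1) * Nat.factorial (2*k)) := by
        rw [show 2*(k+1) = (2*k+1)+1 by ring, Nat.factorial_succ, Nat.factorial_succ]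
      have e2 : Nat.factorial (k+1) = (k+1) * Nat.factorial k := Nat.factorial_succ k
      rw [e1, e2]
      push_cast
      rw [show 2*(k+1) = (2*k)+1+1 by ring, pow_succ, pow_succ]
      field_simp
    calc Real.sqrt (∫ x in Set.Ioi (0:ℝ), x ^ (-2 * (k:ℤ) - 2) * v x ^ 2)
        ≤ (2 / (2 * (k:ℝ) + 1)) *
            Real.sqrt (∫ x in Set.Ioi (0:ℝ), x ^ (-2 * (k:ℤ)) * (deriv v x) ^ 2) := hstep
      _ ≤ (2 / (2 * (k:ℝ) + 1)) *
            ((2 ^ (2 * k) * (Nat.factorial k) / (Nat.factorial (2 * k)) : ℝ) *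
              Real.sqrt (∫ x in Set.Ioi (0:ℝ), (iteratedDeriv k (deriv v) x) ^ 2)) := by
          refine mul_le_mul_of_nonneg_left hih (by positivity)
      _ = (2 ^ (2 * (k+1)) * (Nat.factorial (k+1)) / (Nat.factorial (2 * (k+1))) : ℝ) *
            Real.sqrt (∫ x in Set.Ioi (0:ℝ), (iteratedDeriv k (deriv v) x) ^ 2) := by
          rw [hc]; ring

/-- Generalized Hardy inequality: for `d ≥ 1` and `u ∈ C_c^∞((0,∞))`,
`(∫₀^∞ x^{-2d} |u|² dx)^{1/2} ≤ (2^{2d} d! / (2d)!) (∫₀^∞ |u^{(d)}|² dx)^{1/2}`. -/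
theorem hardy_inequality_iterated (d : ℕ) (hd : 1 ≤ d) (u : ℝ → ℝ)
    (hu : ContDiff ℝ (⊤ : ℕ∞) u) (hcs : HasCompactSupport u)
    (hsupp : tsupport u ⊆ Set.Ioi (0 : ℝ)) :
    Real.sqrt (∫ x in Set.Ioi (0 : ℝ), x ^ (-2 * (d : ℤ)) * (u x) ^ 2) ≤
      (2 ^ (2 * d) * (Nat.factorial d) / (Nat.factorial (2 * d)) : ℝ) *
        Real.sqrt (∫ x in Set.Ioi (0 : ℝ), (iteratedDeriv d u x) ^ 2) := by
  exact hardy_iter d u hu hcs hsupp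
end

section
/- Let a > 0 and let f : (0,1] → ℝ be measurable with I := ∫₀¹ ρ^{−2a} |f(ρ)|² dρ/ρ < ∞. Then ∫₀¹ |f(s)| ds/s < ∞; setting c := ∫₀¹ f(s) ds/s and u(ρ) := ∫_ρ¹ f(s) ds/s, one has |c|² ≤ (2a)^{−1} I and ∫₀¹ ρ^{−2a} |u(ρ) − c|² dρ/ρ ≤ a^{−2} I. In particular u(ρ) converges to the constant c as ρ → 0⁺, with remainder u − c lying in the weighted space of weight a. -/
open MeasureTheory Set Filter
open scoped ENNReal NNReal

/-- Cauchy–Schwarz for lower integrals of `ℝ≥0∞`-valued functions. -/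
lemma cs_lintegral {α : Type*} [MeasurableSpace α] {μ : Measure α} {p q : α → ℝ≥0∞}
    (hp : AEMeasurable p μ) (hq : AEMeasurable q μ) :
    (∫⁻ x, p x * q x ∂μ) ^ 2 ≤ (∫⁻ x, p x ^ 2 ∂μ) * (∫⁻ x, q x ^ 2 ∂μ) := by
  have hpq : (2:ℝ).HolderConjugate 2 := ⟨by norm_num, by norm_num, by norm_num⟩
  have h := ENNReal.lintegral_mul_le_Lp_mul_Lq μ hpq hp hq
  have e1 : ∀ g : α → ℝ≥0∞, (∫⁻ x, g x ^ (2:ℝ) ∂μ) = ∫⁻ x, g x ^ 2 ∂μ := by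
    intro g; apply lintegral_congr; intro x; rw [← ENNReal.rpow_natCast (g x) 2]; norm_num
  rw [e1, e1] at h
  calc (∫⁻ x, p x * q x ∂μ) ^ 2
      ≤ ((∫⁻ x, p x ^ 2 ∂μ) ^ (1/2:ℝ) * (∫⁻ x, q x ^ 2 ∂μ) ^ (1/2:ℝ)) ^ 2 :=
        pow_le_pow_left₀ zero_le h 2
    _ = (∫⁻ x, p x ^ 2 ∂μ) * (∫⁻ x, q x ^ 2 ∂μ) := by
        rw [mul_pow, ← ENNReal.rpow_natCast (_ ^ (1/2:ℝ)) 2, ← ENNReal.rpow_natCast (_ ^ (1/2:ℝ)) 2,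
          ← ENNReal.rpow_mul, ← ENNReal.rpow_mul]
        norm_num

/-- Integrability of `s ^ r` on `Ioc 0 ρ` for `r > -1`. -/
lemma int_rpow_Ioc {r : ℝ} (hr : -1 < r) {ρ : ℝ} (hρ : 0 < ρ) :
    IntegrableOn (fun s : ℝ => s ^ r) (Ioc 0 ρ) := by
  rw [← intervalIntegrable_iff_integrableOn_Ioc_of_le hρ.le]
  exact intervalIntegral.intervalIntegrable_rpow' hr

/-- Value of `∫ s in Ioc 0 ρ, s ^ r` for `r > -1`. -/
lemma integral_rpow_Ioc {r : ℝ} (hr : -1 < r) {ρ : ℝ} (hρ : 0 < ρ) :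
    ∫ s in Ioc (0:ℝ) ρ, s ^ r = ρ ^ (r+1) / (r+1) := by
  rw [← intervalIntegral.integral_of_le hρ.le, integral_rpow (Or.inl hr),
    Real.zero_rpow (by linarith : r + 1 ≠ 0), sub_zero]

/-- `lintegral` version of `integral_rpow_Ioc`. -/
lemma lint_rpow_Ioc {r : ℝ} (hr : -1 < r) {ρ : ℝ} (hρ : 0 < ρ) :
    ∫⁻ s in Ioc (0:ℝ) ρ, ENNReal.ofReal (s ^ r) = ENNReal.ofReal (ρ ^ (r+1) / (r+1)) := by
  rw [← ofReal_integral_eq_lintegral_ofReal (int_rpow_Ioc hr hρ) ?_, integral_rpow_Ioc hr hρ]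
  filter_upwards [ae_restrict_mem measurableSet_Ioc] with s hs
  exact Real.rpow_nonneg hs.1.le r

/-- The tail integral `∫ ρ in Icc s 1, ρ^(-a-1)` (as a lower integral) is at most
`a⁻¹ * s^(-a)`. -/
lemma lint_tail_le {a s : ℝ} (ha : 0 < a) (hs0 : 0 < s) (hs1 : s ≤ 1) :
    ∫⁻ ρ in Icc s 1, ENNReal.ofReal (ρ ^ (-a-1)) ≤ ENNReal.ofReal (a⁻¹ * s ^ (-a)) := by
  have hIcc : (volume : Measure ℝ).restrict (Ioc s 1) = volume.restrict (Icc s 1) :=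
    Measure.restrict_congr_set Ioc_ae_eq_Icc
  have hint : IntegrableOn (fun ρ : ℝ => ρ ^ (-a-1)) (Ioc s 1) := by
    rw [← intervalIntegrable_iff_integrableOn_Ioc_of_le hs1]
    apply intervalIntegral.intervalIntegrable_rpow (Or.inr ?_)
    rw [uIcc_of_le hs1]
    intro h; exact absurd h.1 (by linarith)
  have hval : ∫ ρ in Ioc s 1, ρ ^ (-a-1) = (s ^ (-a) - 1) / a := by
    rw [← intervalIntegral.integral_of_le hs1, integral_rpow (Or.inr ⟨by intro h; linarith, ?_⟩)]
    · rw [show -a - 1 + 1 = -a by ring, Real.one_rpow, div_neg, ← neg_div, neg_sub]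
    · rw [uIcc_of_le hs1]
      intro h; exact absurd h.1 (by linarith)
  calc ∫⁻ ρ in Icc s 1, ENNReal.ofReal (ρ ^ (-a-1))
      = ∫⁻ ρ in Ioc s 1, ENNReal.ofReal (ρ ^ (-a-1)) := by rw [hIcc]
    _ = ENNReal.ofReal ((s ^ (-a) - 1) / a) := by
        rw [← ofReal_integral_eq_lintegral_ofReal hint ?_, hval]
        filter_upwards [ae_restrict_mem measurableSet_Ioc] with ρ hρ
        exact Real.rpow_nonneg (by linarith [hρ.1] : (0:ℝ) ≤ ρ) _
    _ ≤ ENNReal.ofReal (a⁻¹ * s ^ (-a)) := by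
        apply ENNReal.ofReal_le_ofReal
        rw [inv_mul_eq_div]
        gcongr
        linarith

/-- For a weight `a > 0`, a solution `u(ρ) = ∫_ρ¹ f(s) ds/s` of `ρ ∂_ρ u = -f` with
`I = ∫₀¹ ρ^{-2a} |f|² dρ/ρ < ∞` has a constant leading term `c = ∫₀¹ f(s) ds/s` (the integral
converging absolutely), with `|c|² ≤ (2a)⁻¹ I`, and the remainder `u - c` lies in the weighted
space of weight `a`: `∫₀¹ ρ^{-2a} |u - c|² dρ/ρ ≤ a⁻² I`; in particular `u(ρ) → c` as
`ρ → 0⁺`. -/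
theorem weighted_ode_positive_weight (a : ℝ) (ha : 0 < a) (f : ℝ → ℝ)
    (hf : Measurable f)
    (hI : IntegrableOn (fun ρ => ρ ^ (-(2 * a)) * (f ρ) ^ 2 / ρ) (Ioc 0 1)) :
    IntegrableOn (fun s => |f s| / s) (Ioc (0 : ℝ) 1) ∧
    (∫ s in Ioc (0 : ℝ) 1, f s / s) ^ 2 ≤
      (2 * a)⁻¹ * (∫ ρ in Ioc (0 : ℝ) 1, ρ ^ (-(2 * a)) * (f ρ) ^ 2 / ρ) ∧
    IntegrableOn
      (fun ρ => ρ ^ (-(2 * a)) *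
        ((∫ s in Ioc ρ 1, f s / s) - ∫ s in Ioc (0 : ℝ) 1, f s / s) ^ 2 / ρ) (Ioc 0 1) ∧
    (∫ ρ in Ioc (0 : ℝ) 1, ρ ^ (-(2 * a)) *
        ((∫ s in Ioc ρ 1, f s / s) - ∫ s in Ioc (0 : ℝ) 1, f s / s) ^ 2 / ρ) ≤
      a⁻¹ ^ 2 * (∫ ρ in Ioc (0 : ℝ) 1, ρ ^ (-(2 * a)) * (f ρ) ^ 2 / ρ) ∧
    Tendsto (fun ρ : ℝ => ∫ s in Ioc ρ 1, f s / s) (nhdsWithin 0 (Ioi 0))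
      (nhds (∫ s in Ioc (0 : ℝ) 1, f s / s)) := by
  have h2a : (0:ℝ) < 2 * a := by linarith
  have hrpm : ∀ r : ℝ, Measurable fun s : ℝ => s ^ r := fun r => by measurability
  have hIm : Measurable fun s : ℝ => ENNReal.ofReal (s ^ (-(2 * a)) * (f s) ^ 2 / s) :=
    (((hrpm _).mul (hf.pow_const 2)).div measurable_id).ennreal_ofReal
  set g : ℝ → ℝ := fun s => |f s| / s with hg_def
  -- Part 1 : integrability of |f s| / s
  have hq_int : IntegrableOn (fun s : ℝ => s ^ (2*a - 1)) (Ioc 0 1) :=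
    int_rpow_Ioc (by linarith) one_pos
  have hgm : Measurable g := hf.abs.div measurable_id
  have hg_int : IntegrableOn g (Ioc 0 1) := by
    refine Integrable.mono' ((hI.add hq_int).const_mul 2⁻¹) hgm.aestronglyMeasurable ?_
    filter_upwards [ae_restrict_mem measurableSet_Ioc] with s hs
    have hs0 : (0:ℝ) < s := hs.1
    have e1 : s^(-a) * s^(-a) = s^(-(2*a)) := by rw [← Real.rpow_add hs0]; ring_nf
    have e3 : s^(-a) * s^a = 1 := by rw [← Real.rpow_add hs0]; simp
    have e4 : s^(2*a - 1) = s^a * s^a * s⁻¹ := by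
      rw [← Real.rpow_add hs0, Real.rpow_sub hs0, Real.rpow_one]; ring_nf
    have hnorm : ‖g s‖ = |f s| / s := by
      rw [hg_def, Real.norm_eq_abs, abs_div, abs_abs, abs_of_pos hs0]
    rw [hnorm]
    have hpq : 2 * |f s| ≤ s^(-(2*a)) * f s ^ 2 + s^a * s^a := by
      have h := two_mul_le_add_sq (s^(-a) * |f s|) (s^a)
      have hmul : s^(-a) * |f s| * s^a = |f s| := by
        calc s^(-a) * |f s| * s^a = s^(-a) * s^a * |f s| := by ring
          _ = |f s| := by rw [e3, one_mul]
      have hsq : (s^(-a) * |f s|)^2 = s^(-(2*a)) * f s ^ 2 := by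
        calc (s^(-a) * |f s|)^2 = s^(-a) * s^(-a) * |f s|^2 := by ring
          _ = s^(-(2*a)) * f s ^ 2 := by rw [e1, sq_abs]
      have hq2 : (s^a)^2 = s^a * s^a := sq (s^a)
      linarith [h, hmul, hsq, hq2]
    have hkey : |f s| * s⁻¹ ≤ 2⁻¹ * ((s^(-(2*a)) * f s ^ 2) * s⁻¹ + s^(2*a-1)) := by
      rw [e4]
      have h2 := mul_le_mul_of_nonneg_right hpq (inv_pos.mpr hs0).le
      nlinarith [h2]
    calc |f s| / s = |f s| * s⁻¹ := div_eq_mul_inv _ _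
      _ ≤ 2⁻¹ * ((s^(-(2*a)) * f s ^ 2) * s⁻¹ + s^(2*a-1)) := hkey
      _ = 2⁻¹ * (s^(-(2*a)) * f s ^ 2 / s + s^(2*a-1)) := by rw [div_eq_mul_inv]
  -- integrability of f s / s
  have hfsm : Measurable fun s : ℝ => f s / s := hf.div measurable_id
  have hfs_int : IntegrableOn (fun s : ℝ => f s / s) (Ioc 0 1) := by
    refine Integrable.mono' hg_int hfsm.aestronglyMeasurable ?_
    filter_upwards [ae_restrict_mem measurableSet_Ioc] with s hs
    rw [Real.norm_eq_abs, abs_div, abs_of_pos hs.1]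
  -- splitting of the integral
  have hfs_int' : ∀ ρ ∈ Ioc (0:ℝ) 1, IntegrableOn (fun s : ℝ => f s / s) (Ioc 0 ρ) :=
    fun ρ hρ => hfs_int.mono_set (Ioc_subset_Ioc_right hρ.2)
  have hg_int' : ∀ ρ ∈ Ioc (0:ℝ) 1, IntegrableOn g (Ioc 0 ρ) :=
    fun ρ hρ => hg_int.mono_set (Ioc_subset_Ioc_right hρ.2)
  have hsplit : ∀ ρ ∈ Ioc (0:ℝ) 1,
      (∫ s in Ioc (0:ℝ) 1, f s / s)
        = (∫ s in Ioc (0:ℝ) ρ, f s / s) + ∫ s in Ioc ρ 1, f s / s := by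
    intro ρ hρ
    rw [← setIntegral_union (Ioc_disjoint_Ioc_of_le le_rfl) measurableSet_Ioc (hfs_int' ρ hρ)
      (hfs_int.mono_set (Ioc_subset_Ioc_left hρ.1.le)), Ioc_union_Ioc_eq_Ioc hρ.1.le hρ.2]
  -- |∫ f/s| ≤ ∫ g over Ioc 0 ρ
  have habs : ∀ ρ ∈ Ioc (0:ℝ) 1,
      |∫ s in Ioc (0:ℝ) ρ, f s / s| ≤ ∫ s in Ioc (0:ℝ) ρ, g s := by
    intro ρ hρ
    calc |∫ s in Ioc (0:ℝ) ρ, f s / s| = ‖∫ s in Ioc (0:ℝ) ρ, f s / s‖ :=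
        (Real.norm_eq_abs _).symm
      _ ≤ ∫ s in Ioc (0:ℝ) ρ, ‖f s / s‖ := norm_integral_le_integral_norm _
      _ = ∫ s in Ioc (0:ℝ) ρ, g s := by
          refine setIntegral_congr_fun measurableSet_Ioc fun s hs => ?_
          rw [Real.norm_eq_abs, abs_div, abs_of_pos hs.1]
  have hgnn : ∀ ρ : ℝ, 0 ≤ᵐ[volume.restrict (Ioc (0:ℝ) ρ)] g := by
    intro ρ
    filter_upwards [ae_restrict_mem measurableSet_Ioc] with s hs
    exact div_nonneg (abs_nonneg _) hs.1.le
  -- the lintegral version of I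
  have hInn : 0 ≤ᵐ[volume.restrict (Ioc (0:ℝ) 1)]
      fun ρ => ρ ^ (-(2 * a)) * (f ρ) ^ 2 / ρ := by
    filter_upwards [ae_restrict_mem measurableSet_Ioc] with s hs
    have hs0 : (0:ℝ) < s := hs.1
    positivity
  have hIofReal : ENNReal.ofReal (∫ ρ in Ioc (0:ℝ) 1, ρ ^ (-(2 * a)) * (f ρ) ^ 2 / ρ)
      = ∫⁻ ρ in Ioc (0:ℝ) 1, ENNReal.ofReal (ρ ^ (-(2 * a)) * (f ρ) ^ 2 / ρ) :=
    ofReal_integral_eq_lintegral_ofReal hI hInn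
  have hInonneg : 0 ≤ ∫ ρ in Ioc (0:ℝ) 1, ρ ^ (-(2 * a)) * (f ρ) ^ 2 / ρ :=
    integral_nonneg_of_ae hInn
  -- Part 2 : Cauchy–Schwarz for the constant term
  have part2 : (∫ s in Ioc (0 : ℝ) 1, f s / s) ^ 2 ≤
      (2 * a)⁻¹ * (∫ ρ in Ioc (0 : ℝ) 1, ρ ^ (-(2 * a)) * (f ρ) ^ 2 / ρ) := by
    set P : ℝ → ℝ≥0∞ := fun s => ENNReal.ofReal (s ^ (-a-2⁻¹) * |f s|) with hP
    set Q : ℝ → ℝ≥0∞ := fun s => ENNReal.ofReal (s ^ (a-2⁻¹)) with hQ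
    have hPm : Measurable P := ((hrpm _).mul hf.abs).ennreal_ofReal
    have hQm : Measurable Q := (hrpm _).ennreal_ofReal
    have h1 : ENNReal.ofReal (∫ s in Ioc (0:ℝ) 1, g s)
        = ∫⁻ s in Ioc (0:ℝ) 1, P s * Q s := by
      rw [ofReal_integral_eq_lintegral_ofReal hg_int (hgnn 1)]
      refine setLIntegral_congr_fun measurableSet_Ioc (fun s hs => ?_)
      rw [hP, hQ, ← ENNReal.ofReal_mul
        (mul_nonneg (Real.rpow_nonneg hs.1.le _) (abs_nonneg _))]
      congr 1
      have hmul : s ^ (-a-2⁻¹) * s ^ (a-2⁻¹) = s⁻¹ := by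
        rw [← Real.rpow_add hs.1, show -a-2⁻¹ + (a-2⁻¹) = -1 by ring, Real.rpow_neg_one]
      calc |f s| / s = s ^ (-a-2⁻¹) * s ^ (a-2⁻¹) * |f s| := by
            rw [hmul, div_eq_mul_inv]; ring
        _ = s ^ (-a-2⁻¹) * |f s| * s ^ (a-2⁻¹) := by ring
    have h2 : (∫⁻ s in Ioc (0:ℝ) 1, P s ^ 2)
        = ∫⁻ s in Ioc (0:ℝ) 1, ENNReal.ofReal (s ^ (-(2*a)) * f s ^ 2 / s) := by
      refine setLIntegral_congr_fun measurableSet_Ioc (fun s hs => ?_)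
      rw [hP, ← ENNReal.ofReal_pow
        (mul_nonneg (Real.rpow_nonneg hs.1.le _) (abs_nonneg _))]
      congr 1
      have e1 : s ^ (-a-2⁻¹) * s ^ (-a-2⁻¹) = s ^ (-(2*a)) * s⁻¹ := by
        rw [← Real.rpow_add hs.1, show -a-2⁻¹ + (-a-2⁻¹) = -(2*a) + (-1) by ring,
          Real.rpow_add hs.1, Real.rpow_neg_one]
      calc (s ^ (-a-2⁻¹) * |f s|)^2 = s ^ (-a-2⁻¹) * s ^ (-a-2⁻¹) * |f s|^2 := by ring
        _ = s ^ (-(2*a)) * f s ^ 2 / s := by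
            rw [e1, sq_abs, div_eq_mul_inv]; ring
    have h3 : (∫⁻ s in Ioc (0:ℝ) 1, Q s ^ 2) = ENNReal.ofReal ((2*a)⁻¹) := by
      have heq : (∫⁻ s in Ioc (0:ℝ) 1, Q s ^ 2)
          = ∫⁻ s in Ioc (0:ℝ) 1, ENNReal.ofReal (s ^ (2*a-1)) := by
        refine setLIntegral_congr_fun measurableSet_Ioc (fun s hs => ?_)
        rw [hQ, ← ENNReal.ofReal_pow (Real.rpow_nonneg hs.1.le _)]
        congr 1
        calc (s ^ (a-2⁻¹))^2 = s ^ (a-2⁻¹) * s ^ (a-2⁻¹) := sq _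
          _ = s ^ (2*a-1) := by
              rw [← Real.rpow_add hs.1, show a-2⁻¹ + (a-2⁻¹) = 2*a-1 by ring]
      rw [heq, lint_rpow_Ioc (by linarith) one_pos, show 2*a-1+1 = 2*a by ring,
        Real.one_rpow, one_div]
    have hCS := cs_lintegral (μ := volume.restrict (Ioc (0:ℝ) 1))
      hPm.aemeasurable hQm.aemeasurable
    rw [← h1] at hCS
    rw [h2, h3, ← hIofReal] at hCS
    have hg0 : 0 ≤ ∫ s in Ioc (0:ℝ) 1, g s := integral_nonneg_of_ae (hgnn 1)
    have hofReal : ENNReal.ofReal ((∫ s in Ioc (0:ℝ) 1, g s)^2)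
        ≤ ENNReal.ofReal ((2*a)⁻¹ * ∫ ρ in Ioc (0:ℝ) 1, ρ ^ (-(2 * a)) * (f ρ) ^ 2 / ρ) := by
      rw [ENNReal.ofReal_pow hg0, ENNReal.ofReal_mul (by positivity)]
      exact hCS.trans_eq (mul_comm _ _)
    have hg_sq : (∫ s in Ioc (0:ℝ) 1, g s)^2
        ≤ (2*a)⁻¹ * ∫ ρ in Ioc (0:ℝ) 1, ρ ^ (-(2 * a)) * (f ρ) ^ 2 / ρ :=
      (ENNReal.ofReal_le_ofReal_iff (by positivity)).mp hofReal
    have hc := habs 1 ⟨one_pos, le_rfl⟩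
    calc (∫ s in Ioc (0:ℝ) 1, f s / s) ^ 2 = |∫ s in Ioc (0:ℝ) 1, f s / s| ^ 2 :=
        (sq_abs _).symm
      _ ≤ (∫ s in Ioc (0:ℝ) 1, g s)^2 := pow_le_pow_left₀ (abs_nonneg _) hc 2
      _ ≤ _ := hg_sq
  -- notation for the remainder integrand
  set c : ℝ := ∫ s in Ioc (0:ℝ) 1, f s / s with hc_def
  set H : ℝ → ℝ≥0∞ := fun s => ENNReal.ofReal (s ^ (-a-1) * f s ^ 2) with hH
  have hHm : Measurable H := ((hrpm _).mul (hf.pow_const 2)).ennreal_ofReal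
  set Kb : ℝ → ℝ≥0∞ := fun ρ => ∫⁻ s in Ioc (0:ℝ) ρ, H s with hKb
  have hKb_mono : Monotone Kb := fun x y hxy =>
    lintegral_mono_set (Ioc_subset_Ioc_right hxy)
  have hKbm : Measurable Kb := hKb_mono.measurable
  -- pointwise Cauchy–Schwarz bound inside the Hardy inequality
  have hCSg : ∀ ρ ∈ Ioc (0:ℝ) 1,
      (ENNReal.ofReal (∫ s in Ioc (0:ℝ) ρ, g s)) ^ 2 ≤ Kb ρ * ENNReal.ofReal (ρ ^ a / a) := by
    intro ρ hρ
    set P : ℝ → ℝ≥0∞ := fun s => ENNReal.ofReal (s ^ ((-a-1)/2) * |f s|) with hP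
    set Q : ℝ → ℝ≥0∞ := fun s => ENNReal.ofReal (s ^ ((a-1)/2)) with hQ
    have hPm : Measurable P := ((hrpm _).mul hf.abs).ennreal_ofReal
    have hQm : Measurable Q := (hrpm _).ennreal_ofReal
    have h1 : ENNReal.ofReal (∫ s in Ioc (0:ℝ) ρ, g s)
        = ∫⁻ s in Ioc (0:ℝ) ρ, P s * Q s := by
      rw [ofReal_integral_eq_lintegral_ofReal (hg_int' ρ hρ) (hgnn ρ)]
      refine setLIntegral_congr_fun measurableSet_Ioc (fun s hs => ?_)
      rw [hP, hQ, ← ENNReal.ofReal_mul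
        (mul_nonneg (Real.rpow_nonneg hs.1.le _) (abs_nonneg _))]
      congr 1
      have hmul : s ^ ((-a-1)/2) * s ^ ((a-1)/2) = s⁻¹ := by
        rw [← Real.rpow_add hs.1, show (-a-1)/2 + (a-1)/2 = -1 by ring, Real.rpow_neg_one]
      calc |f s| / s = s ^ ((-a-1)/2) * s ^ ((a-1)/2) * |f s| := by
            rw [hmul, div_eq_mul_inv]; ring
        _ = s ^ ((-a-1)/2) * |f s| * s ^ ((a-1)/2) := by ring
    have h2 : (∫⁻ s in Ioc (0:ℝ) ρ, P s ^ 2) = Kb ρ := by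
      refine setLIntegral_congr_fun measurableSet_Ioc (fun s hs => ?_)
      rw [hP, hH, ← ENNReal.ofReal_pow
        (mul_nonneg (Real.rpow_nonneg hs.1.le _) (abs_nonneg _))]
      congr 1
      calc (s ^ ((-a-1)/2) * |f s|)^2 = s ^ ((-a-1)/2) * s ^ ((-a-1)/2) * |f s|^2 := by ring
        _ = s ^ (-a-1) * f s ^ 2 := by
            rw [← Real.rpow_add hs.1, show (-a-1)/2 + (-a-1)/2 = -a-1 by ring, sq_abs]
    have h3 : (∫⁻ s in Ioc (0:ℝ) ρ, Q s ^ 2) = ENNReal.ofReal (ρ ^ a / a) := by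
      have heq : (∫⁻ s in Ioc (0:ℝ) ρ, Q s ^ 2)
          = ∫⁻ s in Ioc (0:ℝ) ρ, ENNReal.ofReal (s ^ (a-1)) := by
        refine setLIntegral_congr_fun measurableSet_Ioc (fun s hs => ?_)
        rw [hQ, ← ENNReal.ofReal_pow (Real.rpow_nonneg hs.1.le _)]
        congr 1
        calc (s ^ ((a-1)/2))^2 = s ^ ((a-1)/2) * s ^ ((a-1)/2) := sq _
          _ = s ^ (a-1) := by
              rw [← Real.rpow_add hs.1, show (a-1)/2 + (a-1)/2 = a-1 by ring]
      rw [heq, lint_rpow_Ioc (by linarith) hρ.1, show a-1+1 = a by ring]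
    have hCS := cs_lintegral (μ := volume.restrict (Ioc (0:ℝ) ρ))
      hPm.aemeasurable hQm.aemeasurable
    rw [← h1, h2, h3] at hCS
    exact hCS
  -- the pointwise bound for the remainder integrand
  have hmain_pt : ∀ ρ ∈ Ioc (0:ℝ) 1,
      ENNReal.ofReal (ρ ^ (-(2 * a)) * ((∫ s in Ioc ρ 1, f s / s) - c) ^ 2 / ρ)
        ≤ ENNReal.ofReal a⁻¹ * (ENNReal.ofReal (ρ ^ (-a-1)) * Kb ρ) := by
    intro ρ hρ
    have hρ0 : (0:ℝ) < ρ := hρ.1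
    have hd : (∫ s in Ioc ρ 1, f s / s) - c = -(∫ s in Ioc (0:ℝ) ρ, f s / s) := by
      have := hsplit ρ hρ; rw [hc_def]; linarith
    have hsq : ((∫ s in Ioc ρ 1, f s / s) - c)^2 ≤ (∫ s in Ioc (0:ℝ) ρ, g s)^2 := by
      rw [hd, neg_sq, ← sq_abs]
      exact pow_le_pow_left₀ (abs_nonneg _) (habs ρ hρ) 2
    have hw : ρ ^ (-(2 * a)) * ((∫ s in Ioc ρ 1, f s / s) - c) ^ 2 / ρ
        = (ρ ^ (-(2 * a)) / ρ) * ((∫ s in Ioc ρ 1, f s / s) - c) ^ 2 := by ring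
    have hg0 : 0 ≤ ∫ s in Ioc (0:ℝ) ρ, g s := integral_nonneg_of_ae (hgnn ρ)
    calc ENNReal.ofReal (ρ ^ (-(2 * a)) * ((∫ s in Ioc ρ 1, f s / s) - c) ^ 2 / ρ)
        = ENNReal.ofReal (ρ ^ (-(2 * a)) / ρ)
            * ENNReal.ofReal (((∫ s in Ioc ρ 1, f s / s) - c) ^ 2) := by
          rw [hw, ENNReal.ofReal_mul (by positivity)]
      _ ≤ ENNReal.ofReal (ρ ^ (-(2 * a)) / ρ)
            * (Kb ρ * ENNReal.ofReal (ρ ^ a / a)) := by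
          gcongr
          calc ENNReal.ofReal (((∫ s in Ioc ρ 1, f s / s) - c) ^ 2)
              ≤ ENNReal.ofReal ((∫ s in Ioc (0:ℝ) ρ, g s)^2) := ENNReal.ofReal_le_ofReal hsq
            _ = (ENNReal.ofReal (∫ s in Ioc (0:ℝ) ρ, g s))^2 := ENNReal.ofReal_pow hg0 2
            _ ≤ Kb ρ * ENNReal.ofReal (ρ ^ a / a) := hCSg ρ hρ
      _ = ENNReal.ofReal (ρ ^ (-(2 * a)) / ρ * (ρ ^ a / a)) * Kb ρ := by
          rw [ENNReal.ofReal_mul (by positivity)]; ring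
      _ = ENNReal.ofReal a⁻¹ * (ENNReal.ofReal (ρ ^ (-a-1)) * Kb ρ) := by
          have e1 : ρ ^ (-(2*a)) * ρ ^ a = ρ ^ (-a) := by
            rw [← Real.rpow_add hρ0]; ring_nf
          have e2 : ρ ^ (-a) * ρ⁻¹ = ρ ^ (-a-1) := by
            rw [← Real.rpow_neg_one ρ, ← Real.rpow_add hρ0]; ring_nf
          have e3 : ρ ^ (-(2*a)) / ρ * (ρ ^ a / a) = a⁻¹ * ρ ^ (-a-1) := by
            calc ρ ^ (-(2*a)) / ρ * (ρ ^ a / a)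
                = (ρ ^ (-(2*a)) * ρ ^ a) * ρ⁻¹ * a⁻¹ := by
                  rw [div_eq_mul_inv, div_eq_mul_inv]; ring
              _ = a⁻¹ * ρ ^ (-a-1) := by rw [e1, e2]; ring
          rw [e3, ENNReal.ofReal_mul (inv_nonneg.mpr ha.le), mul_assoc]
  -- Tonelli computation for the Hardy inequality
  have hρm : Measurable fun ρ : ℝ => ENNReal.ofReal (ρ ^ (-a-1)) := (hrpm _).ennreal_ofReal
  have hTonelli : (∫⁻ ρ in Ioc (0:ℝ) 1, ENNReal.ofReal (ρ ^ (-a-1)) * Kb ρ)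
      ≤ ENNReal.ofReal a⁻¹
        * ∫⁻ s in Ioc (0:ℝ) 1, ENNReal.ofReal (s ^ (-(2 * a)) * (f s) ^ 2 / s) := by
    set Φ : ℝ → ℝ → ℝ≥0∞ := fun ρ s =>
      Set.indicator {p : ℝ × ℝ | p.2 ≤ p.1}
        (fun p => ENNReal.ofReal (p.1 ^ (-a-1)) * H p.2) (ρ, s) with hΦ
    have hΦm : Measurable (Function.uncurry Φ) := by
      apply Measurable.indicator
      · exact ((hrpm (-a-1)).comp measurable_fst).ennreal_ofReal.mul (hHm.comp measurable_snd)
      · exact measurableSet_le measurable_snd measurable_fst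
    have hstep1 : ∀ ρ ∈ Ioc (0:ℝ) 1,
        ENNReal.ofReal (ρ ^ (-a-1)) * Kb ρ = ∫⁻ s in Ioc (0:ℝ) 1, Φ ρ s := by
      intro ρ hρ
      have hfun : (fun s => Φ ρ s)
          = (Iic ρ).indicator (fun s => ENNReal.ofReal (ρ ^ (-a-1)) * H s) := by
        funext s
        simp only [hΦ, Set.indicator_apply, mem_setOf_eq, mem_Iic]
      rw [hfun, lintegral_indicator measurableSet_Iic,
        Measure.restrict_restrict measurableSet_Iic]
      have hset : Iic ρ ∩ Ioc (0:ℝ) 1 = Ioc 0 ρ := by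
        ext x
        simp only [mem_inter_iff, mem_Iic, mem_Ioc]
        constructor
        · rintro ⟨h1, h2, h3⟩; exact ⟨h2, h1⟩
        · rintro ⟨h1, h2⟩; exact ⟨h2, h1, h2.trans hρ.2⟩
      rw [hset, hKb, lintegral_const_mul _ hHm]
    have hstep2 : ∀ s ∈ Ioc (0:ℝ) 1,
        (∫⁻ ρ in Ioc (0:ℝ) 1, Φ ρ s)
          = (∫⁻ ρ in Icc s 1, ENNReal.ofReal (ρ ^ (-a-1))) * H s := by
      intro s hs
      have hfun : (fun ρ => Φ ρ s)
          = (Ici s).indicator (fun ρ => ENNReal.ofReal (ρ ^ (-a-1)) * H s) := by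
        funext ρ
        simp only [hΦ, Set.indicator_apply, mem_setOf_eq, mem_Ici]
      rw [hfun, lintegral_indicator measurableSet_Ici,
        Measure.restrict_restrict measurableSet_Ici]
      have hset : Ici s ∩ Ioc (0:ℝ) 1 = Icc s 1 := by
        ext x
        simp only [mem_inter_iff, mem_Ici, mem_Ioc, mem_Icc]
        constructor
        · rintro ⟨h1, _, h3⟩; exact ⟨h1, h3⟩
        · rintro ⟨h1, h2⟩; exact ⟨h1, hs.1.trans_le h1, h2⟩
      rw [hset, lintegral_mul_const _ hρm]
    calc (∫⁻ ρ in Ioc (0:ℝ) 1, ENNReal.ofReal (ρ ^ (-a-1)) * Kb ρ)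
        = ∫⁻ ρ in Ioc (0:ℝ) 1, ∫⁻ s in Ioc (0:ℝ) 1, Φ ρ s := by
          exact setLIntegral_congr_fun measurableSet_Ioc hstep1
      _ = ∫⁻ s in Ioc (0:ℝ) 1, ∫⁻ ρ in Ioc (0:ℝ) 1, Φ ρ s :=
          lintegral_lintegral_swap hΦm.aemeasurable
      _ = ∫⁻ s in Ioc (0:ℝ) 1, (∫⁻ ρ in Icc s 1, ENNReal.ofReal (ρ ^ (-a-1))) * H s :=
          setLIntegral_congr_fun measurableSet_Ioc hstep2
      _ ≤ ∫⁻ s in Ioc (0:ℝ) 1, ENNReal.ofReal a⁻¹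
            * ENNReal.ofReal (s ^ (-(2 * a)) * (f s) ^ 2 / s) := by
          refine setLIntegral_mono_ae (measurable_const.mul hIm).aemeasurable
            (ae_of_all _ fun s hs => ?_)
          have hs0 : (0:ℝ) < s := hs.1
          have e1 : s ^ (-a) * s ^ (-a-1) = s ^ (-(2*a)) * s⁻¹ := by
            rw [← Real.rpow_add hs0, show -a + (-a-1) = -(2*a) + (-1) by ring,
              Real.rpow_add hs0, Real.rpow_neg_one]
          have e2 : a⁻¹ * s ^ (-a) * (s ^ (-a-1) * f s ^ 2)
              = a⁻¹ * (s ^ (-(2*a)) * f s ^ 2 / s) := by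
            rw [div_eq_mul_inv]
            calc a⁻¹ * s ^ (-a) * (s ^ (-a-1) * f s ^ 2)
                = a⁻¹ * ((s ^ (-a) * s ^ (-a-1)) * f s ^ 2) := by ring
              _ = a⁻¹ * (s ^ (-(2*a)) * f s ^ 2 * s⁻¹) := by rw [e1]; ring_nf
          calc (∫⁻ ρ in Icc s 1, ENNReal.ofReal (ρ ^ (-a-1))) * H s
              ≤ ENNReal.ofReal (a⁻¹ * s ^ (-a)) * H s := by
                gcongr
                exact lint_tail_le ha hs0 hs.2
            _ = ENNReal.ofReal a⁻¹
                  * ENNReal.ofReal (s ^ (-(2 * a)) * (f s) ^ 2 / s) := by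
                rw [hH, ← ENNReal.ofReal_mul (by positivity), e2,
                  ENNReal.ofReal_mul (by positivity)]
      _ = ENNReal.ofReal a⁻¹
            * ∫⁻ s in Ioc (0:ℝ) 1, ENNReal.ofReal (s ^ (-(2 * a)) * (f s) ^ 2 / s) :=
          lintegral_const_mul _ hIm
  -- measurability of the remainder integrand
  have hplus_int : IntegrableOn (fun s : ℝ => max (f s) 0 / s) (Ioc 0 1) := by
    refine Integrable.mono' hg_int (((hf.max measurable_const).div
      measurable_id).aestronglyMeasurable) ?_
    filter_upwards [ae_restrict_mem measurableSet_Ioc] with s hs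
    rw [Real.norm_eq_abs, abs_div, abs_of_pos hs.1]
    show |max (f s) 0| / s ≤ |f s| / s
    apply (div_le_div_iff_of_pos_right hs.1).mpr
    rw [abs_of_nonneg (le_max_right _ _)]
    exact max_le (le_abs_self _) (abs_nonneg _)
  have hminus_int : IntegrableOn (fun s : ℝ => max (-f s) 0 / s) (Ioc 0 1) := by
    refine Integrable.mono' hg_int (((hf.neg.max measurable_const).div
      measurable_id).aestronglyMeasurable) ?_
    filter_upwards [ae_restrict_mem measurableSet_Ioc] with s hs
    rw [Real.norm_eq_abs, abs_div, abs_of_pos hs.1]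
    show |max (-f s) 0| / s ≤ |f s| / s
    apply (div_le_div_iff_of_pos_right hs.1).mpr
    rw [abs_of_nonneg (le_max_right _ _)]
    exact max_le (abs_neg (f s) ▸ le_abs_self (-f s)) (abs_nonneg _)
  set vp : ℝ → ℝ := fun ρ => ∫ s in Ioc (0:ℝ) (min ρ 1), max (f s) 0 / s with hvp
  set vm : ℝ → ℝ := fun ρ => ∫ s in Ioc (0:ℝ) (min ρ 1), max (-f s) 0 / s with hvm
  have hvp_mono : Monotone vp := by
    intro x y hxy
    refine setIntegral_mono_set (hplus_int.mono_set (Ioc_subset_Ioc_right (min_le_right y 1))) ?_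
      (HasSubset.Subset.eventuallyLE (Ioc_subset_Ioc_right (min_le_min hxy le_rfl)))
    filter_upwards [ae_restrict_mem measurableSet_Ioc] with s hs
    exact div_nonneg (le_max_right _ _) hs.1.le
  have hvm_mono : Monotone vm := by
    intro x y hxy
    refine setIntegral_mono_set (hminus_int.mono_set (Ioc_subset_Ioc_right (min_le_right y 1))) ?_
      (HasSubset.Subset.eventuallyLE (Ioc_subset_Ioc_right (min_le_min hxy le_rfl)))
    filter_upwards [ae_restrict_mem measurableSet_Ioc] with s hs
    exact div_nonneg (le_max_right _ _) hs.1.le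
  have hU : ∀ ρ ∈ Ioc (0:ℝ) 1,
      (∫ s in Ioc ρ 1, f s / s) - c = -(vp ρ - vm ρ) := by
    intro ρ hρ
    have hmin : min ρ 1 = ρ := min_eq_left hρ.2
    have hsub : vp ρ - vm ρ = ∫ s in Ioc (0:ℝ) ρ, f s / s := by
      simp only [hvp, hvm, hmin]
      rw [← integral_sub (hplus_int.mono_set (Ioc_subset_Ioc_right hρ.2))
          (hminus_int.mono_set (Ioc_subset_Ioc_right hρ.2))]
      refine setIntegral_congr_fun measurableSet_Ioc fun s hs => ?_
      rw [div_sub_div_same, max_zero_sub_max_neg_zero_eq_self]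
    rw [hsub]
    have := hsplit ρ hρ
    rw [hc_def]; linarith
  have hmainMeas : AEStronglyMeasurable
      (fun ρ => ρ ^ (-(2 * a)) * ((∫ s in Ioc ρ 1, f s / s) - c) ^ 2 / ρ)
      (volume.restrict (Ioc (0:ℝ) 1)) := by
    have hMeas : Measurable (fun ρ : ℝ => ρ ^ (-(2 * a)) * (vp ρ - vm ρ) ^ 2 / ρ) := by
      exact ((hrpm (-(2*a))).mul
        ((hvp_mono.measurable.sub hvm_mono.measurable).pow_const 2)).div measurable_id
    refine hMeas.aestronglyMeasurable.congr ?_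
    filter_upwards [ae_restrict_mem measurableSet_Ioc] with ρ hρ
    rw [hU ρ hρ, neg_sq]
  -- the lintegral bound for the remainder
  have hmain_nn : 0 ≤ᵐ[volume.restrict (Ioc (0:ℝ) 1)]
      fun ρ => ρ ^ (-(2 * a)) * ((∫ s in Ioc ρ 1, f s / s) - c) ^ 2 / ρ := by
    filter_upwards [ae_restrict_mem measurableSet_Ioc] with ρ hρ
    have hρ0 : (0:ℝ) < ρ := hρ.1
    positivity
  have hJ : (∫⁻ ρ in Ioc (0:ℝ) 1,
      ENNReal.ofReal (ρ ^ (-(2 * a)) * ((∫ s in Ioc ρ 1, f s / s) - c) ^ 2 / ρ))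
      ≤ ENNReal.ofReal a⁻¹ * (ENNReal.ofReal a⁻¹
          * ENNReal.ofReal (∫ ρ in Ioc (0:ℝ) 1, ρ ^ (-(2 * a)) * (f ρ) ^ 2 / ρ)) := by
    calc (∫⁻ ρ in Ioc (0:ℝ) 1,
        ENNReal.ofReal (ρ ^ (-(2 * a)) * ((∫ s in Ioc ρ 1, f s / s) - c) ^ 2 / ρ))
        ≤ ∫⁻ ρ in Ioc (0:ℝ) 1, ENNReal.ofReal a⁻¹
            * (ENNReal.ofReal (ρ ^ (-a-1)) * Kb ρ) := by
          refine setLIntegral_mono_ae ?_ (ae_of_all _ hmain_pt)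
          exact (measurable_const.mul (hρm.mul hKbm)).aemeasurable
      _ = ENNReal.ofReal a⁻¹ * ∫⁻ ρ in Ioc (0:ℝ) 1, ENNReal.ofReal (ρ ^ (-a-1)) * Kb ρ :=
          lintegral_const_mul _ (hρm.mul hKbm)
      _ ≤ ENNReal.ofReal a⁻¹ * (ENNReal.ofReal a⁻¹
            * ∫⁻ s in Ioc (0:ℝ) 1, ENNReal.ofReal (s ^ (-(2 * a)) * (f s) ^ 2 / s)) := by
          exact mul_le_mul_right hTonelli _
      _ = _ := by rw [hIofReal]
  have hJ_top : (∫⁻ ρ in Ioc (0:ℝ) 1,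
      ENNReal.ofReal (ρ ^ (-(2 * a)) * ((∫ s in Ioc ρ 1, f s / s) - c) ^ 2 / ρ)) ≠ ⊤ :=
    (hJ.trans_lt (by finiteness)).ne
  -- Part 3 : integrability of the remainder integrand
  have part3 : IntegrableOn
      (fun ρ => ρ ^ (-(2 * a)) * ((∫ s in Ioc ρ 1, f s / s) - c) ^ 2 / ρ) (Ioc 0 1) := by
    refine ⟨hmainMeas, ?_⟩
    rw [hasFiniteIntegral_iff_ofReal hmain_nn]
    exact hJ_top.lt_top
  -- Part 4 : the Hardy inequality
  have part4 : (∫ ρ in Ioc (0 : ℝ) 1,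
      ρ ^ (-(2 * a)) * ((∫ s in Ioc ρ 1, f s / s) - c) ^ 2 / ρ)
      ≤ a⁻¹ ^ 2 * (∫ ρ in Ioc (0 : ℝ) 1, ρ ^ (-(2 * a)) * (f ρ) ^ 2 / ρ) := by
    rw [integral_eq_lintegral_of_nonneg_ae hmain_nn hmainMeas]
    have hbound := ENNReal.toReal_mono ?_ hJ
    · refine hbound.trans_eq ?_
      rw [ENNReal.toReal_mul, ENNReal.toReal_mul,
        ENNReal.toReal_ofReal (inv_nonneg.mpr ha.le), ENNReal.toReal_ofReal hInonneg]
      ring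
    · finiteness
  -- Part 5 : convergence of u to c
  have part5 : Tendsto (fun ρ : ℝ => ∫ s in Ioc ρ 1, f s / s) (nhdsWithin 0 (Ioi 0))
      (nhds c) := by
    have hseq : Tendsto (fun n : ℕ => ∫ s in Ioc (0:ℝ) ((n+1:ℝ)⁻¹), g s) atTop (nhds 0) := by
      have hanti : Antitone fun n : ℕ => Ioc (0:ℝ) ((n+1:ℝ)⁻¹) := by
        intro n m hnm
        apply Ioc_subset_Ioc_right
        apply inv_anti₀ (by positivity)
        exact_mod_cast by omega
      have hempty : (⋂ n : ℕ, Ioc (0:ℝ) ((n+1:ℝ)⁻¹)) = ∅ := by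
        apply eq_empty_iff_forall_notMem.mpr
        intro x hx
        simp only [mem_iInter, mem_Ioc] at hx
        have hx0 : 0 < x := (hx 0).1
        obtain ⟨n, hn⟩ := exists_nat_gt x⁻¹
        have h1 : x ≤ ((n:ℝ)+1)⁻¹ := (hx n).2
        have h2 : x⁻¹ < (n:ℝ)+1 := by linarith
        have h3 : ((n:ℝ)+1)⁻¹ < x := inv_lt_of_inv_lt₀ hx0 h2
        linarith
      have h := tendsto_setIntegral_of_antitone (f := g) (μ := volume)
        (s := fun n : ℕ => Ioc (0:ℝ) ((n+1:ℝ)⁻¹)) (fun n => measurableSet_Ioc) hanti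
        ⟨0, by simpa using hg_int⟩
      rwa [hempty, Measure.restrict_empty, integral_zero_measure] at h
    rw [Metric.tendsto_nhdsWithin_nhds]
    intro ε hε
    have hev : ∀ᶠ n : ℕ in atTop, ∫ s in Ioc (0:ℝ) ((n+1:ℝ)⁻¹), g s < ε :=
      hseq.eventually (gt_mem_nhds hε)
    obtain ⟨N, hN⟩ := hev.exists
    have h1N : (1:ℝ) ≤ (N:ℝ)+1 := by
      have : (0:ℝ) ≤ (N:ℝ) := Nat.cast_nonneg N
      linarith
    refine ⟨((N:ℝ)+1)⁻¹, by positivity, fun ρ hρ hdist => ?_⟩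
    have hρ0 : (0:ℝ) < ρ := hρ
    have hρδ : ρ < ((N:ℝ)+1)⁻¹ := by
      rwa [Real.dist_eq, sub_zero, abs_of_pos hρ0] at hdist
    have hρ1 : ρ ≤ 1 := by
      have : ((N:ℝ)+1)⁻¹ ≤ 1 := inv_le_one_of_one_le₀ h1N
      linarith
    have hρmem : ρ ∈ Ioc (0:ℝ) 1 := ⟨hρ0, hρ1⟩
    rw [Real.dist_eq]
    have hd : (∫ s in Ioc ρ 1, f s / s) - c = -(∫ s in Ioc (0:ℝ) ρ, f s / s) := by
      linarith [hsplit ρ hρmem]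
    rw [hd, abs_neg]
    calc |∫ s in Ioc (0:ℝ) ρ, f s / s| ≤ ∫ s in Ioc (0:ℝ) ρ, g s := habs ρ hρmem
      _ ≤ ∫ s in Ioc (0:ℝ) ((N:ℝ)+1)⁻¹, g s := by
          refine setIntegral_mono_set
            (hg_int.mono_set (Ioc_subset_Ioc_right ?_)) (hgnn _)
            (HasSubset.Subset.eventuallyLE (Ioc_subset_Ioc_right hρδ.le))
          exact inv_le_one_of_one_le₀ h1N
      _ < ε := by exact_mod_cast hN
  exact ⟨hg_int, part2, part3, part4, part5⟩
end

section
/- Let a₁ > 0 and a₂ ∈ ℝ, and let f : (0,1]×(0,1] → ℝ be measurable with I := ∫₀¹∫₀¹ ρ₁^{−2a₁} ρ₂^{−2a₂} |f(ρ₁,ρ₂)|² (dρ₁/ρ₁)(dρ₂/ρ₂) < ∞. Then for almost every ρ₂ ∈ (0,1] the integral c(ρ₂) := ∫₀¹ f(s,ρ₂) ds/s converges absolutely; c satisfies ∫₀¹ ρ₂^{−2a₂} |c(ρ₂)|² dρ₂/ρ₂ ≤ (2a₁)^{−1} I; and u(ρ₁,ρ₂) := ∫_{ρ₁}¹ f(s,ρ₂)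 ds/s satisfies ∫₀¹∫₀¹ ρ₁^{−2a₁} ρ₂^{−2a₂} |u(ρ₁,ρ₂) − c(ρ₂)|² (dρ₁/ρ₁)(dρ₂/ρ₂) ≤ a₁^{−2} I. -/
open MeasureTheory Set

namespace WOCL

/-- moment integral on `(0,ρ]` -/
lemma lint_rpow_Ioc {c ρ : ℝ} (hc : -1 < c) (hρ : 0 < ρ) :
    ∫⁻ s in Ioc (0:ℝ) ρ, ENNReal.ofReal (s ^ c) = ENNReal.ofReal (ρ ^ (c + 1) / (c + 1)) := by
  rw [← ofReal_integral_eq_lintegral_ofReal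
      ((intervalIntegral.intervalIntegrable_rpow' hc).1)
      ((ae_restrict_iff' measurableSet_Ioc).2 (ae_of_all _ fun s hs => Real.rpow_nonneg hs.1.le c))]
  congr 1
  rw [← intervalIntegral.integral_of_le hρ.le, integral_rpow (Or.inl hc),
    Real.zero_rpow (by linarith), sub_zero]

/-- tail moment integral bound -/
lemma lint_tail {a s : ℝ} (ha : 0 < a) (hs : 0 < s) (hs1 : s ≤ 1) :
    ∫⁻ ρ in Ioc s 1, ENNReal.ofReal (ρ ^ (-a - 1)) ≤ ENNReal.ofReal (s ^ (-a) / a) := by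
  have hint : IntervalIntegrable (fun x : ℝ => x ^ (-a - 1)) volume s 1 := by
    apply intervalIntegral.intervalIntegrable_rpow
    right
    simp only [uIcc_of_le hs1, mem_Icc, not_and, not_le]
    intro h; exact absurd h (not_le.2 hs)
  rw [← ofReal_integral_eq_lintegral_ofReal hint.1
      ((ae_restrict_iff' measurableSet_Ioc).2 (ae_of_all _ fun ρ hρ =>
        Real.rpow_nonneg (le_trans hs.le hρ.1.le) _))]
  apply ENNReal.ofReal_le_ofReal
  rw [← intervalIntegral.integral_of_le hs1, integral_rpow (Or.inr ⟨by intro h; exact absurd (by linarith : a = 0) ha.ne', by simp only [uIcc_of_le hs1, mem_Icc, not_and, not_le]; intro h; exact absurd h (not_le.2 hs)⟩)]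
  have h1 : (-a - 1) + 1 = -a := by ring
  rw [h1, Real.one_rpow]
  have heq : (1 - s ^ (-a)) / (-a) = (s ^ (-a) - 1) / a := by
    rw [div_neg, ← neg_div, neg_sub]
  rw [heq]
  gcongr
  linarith

end WOCL

namespace WOCL
open ENNReal

lemma sqrt_sq (x : ℝ≥0∞) : (x ^ ((2:ℝ)⁻¹)) ^ 2 = x := by
  rw [← ENNReal.rpow_natCast (x ^ ((2:ℝ)⁻¹)) 2, ← ENNReal.rpow_mul]
  norm_num

lemma CS {b ρ : ℝ} (hb : 0 < b) (hρ : 0 < ρ) (g : ℝ → ℝ) (hg : Measurable g) :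
    (∫⁻ s in Ioc (0:ℝ) ρ, ENNReal.ofReal (|g s| / s)) ^ 2 ≤
      ENNReal.ofReal (ρ ^ b / b) *
        ∫⁻ s in Ioc (0:ℝ) ρ, ENNReal.ofReal (s ^ (-b) * g s ^ 2 / s) := by
  set μρ := volume.restrict (Ioc (0:ℝ) ρ) with hμρ
  set F : ℝ → ℝ≥0∞ := fun s => ENNReal.ofReal (s ^ ((b - 1)/2)) with hF
  set G : ℝ → ℝ≥0∞ := fun s => ENNReal.ofReal (s ^ (-(b + 1)/2) * |g s|) with hG
  have hFm : Measurable F := by rw [hF]; fun_prop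
  have hGm : Measurable G := by rw [hG]; fun_prop
  have h22 : ((2:ℝ)).HolderConjugate 2 := Real.HolderConjugate.two_two
  have hcs := ENNReal.lintegral_mul_le_Lp_mul_Lq μρ h22 hFm.aemeasurable hGm.aemeasurable
  have hsplit : ∀ᵐ s ∂μρ, ENNReal.ofReal (|g s| / s) = (F * G) s := by
    rw [hμρ]
    refine (ae_restrict_iff' measurableSet_Ioc).2 (ae_of_all _ fun s hs => ?_)
    have hs0 : 0 < s := hs.1
    simp only [Pi.mul_apply, hF, hG]
    rw [← ENNReal.ofReal_mul (Real.rpow_nonneg hs0.le _)]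
    congr 1
    rw [← mul_assoc, ← Real.rpow_add hs0]
    have : (b - 1)/2 + (-(b + 1)/2) = -1 := by ring
    rw [this, Real.rpow_neg_one, div_eq_inv_mul |g s| s]
  have hIF : ∫⁻ s, F s ^ (2:ℝ) ∂μρ = ENNReal.ofReal (ρ ^ b / b) := by
    have : ∀ᵐ s ∂μρ, F s ^ (2:ℝ) = ENNReal.ofReal (s ^ (b - 1)) := by
      rw [hμρ]
      refine (ae_restrict_iff' measurableSet_Ioc).2 (ae_of_all _ fun s hs => ?_)
      rw [hF, ENNReal.ofReal_rpow_of_nonneg (Real.rpow_nonneg hs.1.le _) (by norm_num),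
        ← Real.rpow_mul hs.1.le]
      norm_num
    rw [lintegral_congr_ae this, hμρ, lint_rpow_Ioc (by linarith) hρ]
    congr 1
    ring_nf
  have hIG : ∫⁻ s, G s ^ (2:ℝ) ∂μρ
      = ∫⁻ s in Ioc (0:ℝ) ρ, ENNReal.ofReal (s ^ (-b) * g s ^ 2 / s) := by
    rw [hμρ]
    refine lintegral_congr_ae ((ae_restrict_iff' measurableSet_Ioc).2
      (ae_of_all _ fun s hs => ?_))
    have hs0 : 0 < s := hs.1
    show ENNReal.ofReal (s ^ (-(b + 1)/2) * |g s|) ^ (2:ℝ) = ENNReal.ofReal (s ^ (-b) * g s ^ 2 / s)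
    rw [ENNReal.ofReal_rpow_of_nonneg
        (mul_nonneg (Real.rpow_nonneg hs0.le _) (abs_nonneg _)) (by norm_num)]
    congr 1
    rw [Real.mul_rpow (Real.rpow_nonneg hs0.le _) (abs_nonneg _), ← Real.rpow_mul hs0.le,
      Real.rpow_two, sq_abs]
    have he : -(b + 1)/2 * 2 = -b + (-1) := by ring
    rw [he, Real.rpow_add hs0, Real.rpow_neg_one, div_eq_mul_inv (s ^ (-b) * g s ^ 2) s]
    ring
  calc (∫⁻ s, ENNReal.ofReal (|g s| / s) ∂μρ) ^ 2
      = (∫⁻ s, (F * G) s ∂μρ) ^ 2 := by rw [lintegral_congr_ae hsplit]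
    _ ≤ ((∫⁻ s, F s ^ (2:ℝ) ∂μρ) ^ ((2:ℝ)⁻¹) * (∫⁻ s, G s ^ (2:ℝ) ∂μρ) ^ ((2:ℝ)⁻¹)) ^ 2 := by
        refine pow_le_pow_left₀ bot_le ?_ 2 ; exact le_of_le_of_eq hcs (by norm_num)
    _ = (∫⁻ s, F s ^ (2:ℝ) ∂μρ) * ∫⁻ s, G s ^ (2:ℝ) ∂μρ := by
        rw [mul_pow, sqrt_sq, sqrt_sq]
    _ = ENNReal.ofReal (ρ ^ b / b) * ∫⁻ s in Ioc (0:ℝ) ρ, ENNReal.ofReal (s ^ (-b) * g s ^ 2 / s) := by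
        rw [hIF, hIG]

lemma oneD {a : ℝ} (ha : 0 < a) (g : ℝ → ℝ) (hg : Measurable g)
    (h2 : IntegrableOn (fun s => s ^ (-(2*a)) * g s ^ 2 / s) (Ioc (0:ℝ) 1)) :
    IntegrableOn (fun s => g s / s) (Ioc (0:ℝ) 1) ∧
    (∫ s in Ioc (0:ℝ) 1, g s / s) ^ 2 ≤ (2*a)⁻¹ * ∫ s in Ioc (0:ℝ) 1, s ^ (-(2*a)) * g s ^ 2 / s ∧
    IntegrableOn (fun ρ => ρ ^ (-(2*a)) * (∫ s in Ioc (0:ℝ) ρ, g s / s) ^ 2 / ρ) (Ioc (0:ℝ) 1) ∧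
    (∫ ρ in Ioc (0:ℝ) 1, ρ ^ (-(2*a)) * (∫ s in Ioc (0:ℝ) ρ, g s / s) ^ 2 / ρ)
      ≤ a⁻¹ ^ 2 * ∫ s in Ioc (0:ℝ) 1, s ^ (-(2*a)) * g s ^ 2 / s := by
  have ha2 : (0:ℝ) < 2 * a := by linarith
  set W : ℝ → ℝ := fun s => s ^ (-(2*a)) * g s ^ 2 / s with hW
  set I1 : ℝ := ∫ s in Ioc (0:ℝ) 1, W s with hI1
  have hWnn : ∀ s ∈ Ioc (0:ℝ) 1, 0 ≤ W s := fun s hs =>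
    div_nonneg (mul_nonneg (Real.rpow_nonneg hs.1.le _) (sq_nonneg _)) hs.1.le
  have hI1nn : 0 ≤ I1 := setIntegral_nonneg measurableSet_Ioc hWnn
  have hLW : ∫⁻ s in Ioc (0:ℝ) 1, ENNReal.ofReal (W s) = ENNReal.ofReal I1 :=
    (ofReal_integral_eq_lintegral_ofReal h2
      ((ae_restrict_iff' measurableSet_Ioc).2 (ae_of_all _ hWnn))).symm
  -- CS with b = 2a on (0,1]
  have hCS1 := CS (b := 2*a) ha2 one_pos g hg
  rw [hLW] at hCS1
  have hψlt : ∫⁻ s in Ioc (0:ℝ) 1, ENNReal.ofReal (|g s| / s) < ⊤ := by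
    refine lt_top_iff_ne_top.2 fun htop => ?_
    rw [htop] at hCS1
    have hfin : ENNReal.ofReal ((1:ℝ) ^ (2*a) / (2*a)) * ENNReal.ofReal I1 < ⊤ :=
      ENNReal.mul_lt_top ENNReal.ofReal_lt_top ENNReal.ofReal_lt_top
    rw [ENNReal.top_pow two_ne_zero] at hCS1
    exact absurd (lt_of_le_of_lt hCS1 hfin) (lt_irrefl _)
  have hInt1 : IntegrableOn (fun s => g s / s) (Ioc (0:ℝ) 1) := by
    refine ⟨(hg.div measurable_id).aestronglyMeasurable, ?_⟩
    rw [hasFiniteIntegral_iff_norm]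
    refine lt_of_eq_of_lt ?_ hψlt
    refine lintegral_congr_ae ((ae_restrict_iff' measurableSet_Ioc).2
      (ae_of_all _ fun s hs => ?_))
    show ENNReal.ofReal ‖g s / s‖ = ENNReal.ofReal (|g s| / s)
    rw [Real.norm_eq_abs, abs_div, abs_of_pos hs.1]
  -- the norm lintegral over a subinterval
  have hψeq : ∀ ρ : ℝ, ρ ∈ Ioc (0:ℝ) 1 →
      ∫⁻ s in Ioc (0:ℝ) ρ, ENNReal.ofReal ‖g s / s‖ = ∫⁻ s in Ioc (0:ℝ) ρ, ENNReal.ofReal (|g s| / s) := by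
    intro ρ hρ
    refine lintegral_congr_ae ((ae_restrict_iff' measurableSet_Ioc).2
      (ae_of_all _ fun s hs => ?_))
    show ENNReal.ofReal ‖g s / s‖ = ENNReal.ofReal (|g s| / s)
    rw [Real.norm_eq_abs, abs_div, abs_of_pos hs.1]
  have habs : ∀ ρ : ℝ, ρ ∈ Ioc (0:ℝ) 1 →
      ENNReal.ofReal ((∫ s in Ioc (0:ℝ) ρ, g s / s) ^ 2)
        ≤ (∫⁻ s in Ioc (0:ℝ) ρ, ENNReal.ofReal (|g s| / s)) ^ 2 := by
    intro ρ hρ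
    have hint : IntegrableOn (fun s => g s / s) (Ioc (0:ℝ) ρ) :=
      hInt1.mono_set (Ioc_subset_Ioc_right hρ.2)
    have h1 : |∫ s in Ioc (0:ℝ) ρ, g s / s| ≤ ∫ s in Ioc (0:ℝ) ρ, ‖g s / s‖ := by
      rw [← Real.norm_eq_abs]; exact norm_integral_le_integral_norm _
    calc ENNReal.ofReal ((∫ s in Ioc (0:ℝ) ρ, g s / s) ^ 2)
        = ENNReal.ofReal (|∫ s in Ioc (0:ℝ) ρ, g s / s| ^ 2) := by rw [sq_abs]
      _ = ENNReal.ofReal |∫ s in Ioc (0:ℝ) ρ, g s / s| ^ 2 :=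
          ENNReal.ofReal_pow (abs_nonneg _) 2
      _ ≤ ENNReal.ofReal (∫ s in Ioc (0:ℝ) ρ, ‖g s / s‖) ^ 2 :=
          pow_le_pow_left' (ENNReal.ofReal_le_ofReal h1) 2
      _ = (∫⁻ s in Ioc (0:ℝ) ρ, ENNReal.ofReal ‖g s / s‖) ^ 2 := by
          rw [ofReal_integral_eq_lintegral_ofReal hint.norm
            (ae_of_all _ fun s => norm_nonneg _)]
      _ = (∫⁻ s in Ioc (0:ℝ) ρ, ENNReal.ofReal (|g s| / s)) ^ 2 := by rw [hψeq ρ hρ]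
  -- part 2
  have hpart2 : (∫ s in Ioc (0:ℝ) 1, g s / s) ^ 2 ≤ (2*a)⁻¹ * I1 := by
    have hthis := (habs 1 (by constructor <;> norm_num)).trans hCS1
    have h3 : ENNReal.ofReal ((1:ℝ) ^ (2*a) / (2*a)) * ENNReal.ofReal I1
        = ENNReal.ofReal ((2*a)⁻¹ * I1) := by
      rw [Real.one_rpow, one_div, ← ENNReal.ofReal_mul (by positivity)]
    rw [h3] at hthis
    exact (ENNReal.ofReal_le_ofReal_iff (by positivity)).1 hthis
  -- ## Hardy part
  set P : ℝ → ℝ := fun ρ => ∫ s in Ioc (0:ℝ) ρ, g s / s with hP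
  set μ : Measure ℝ := volume.restrict (Ioc (0:ℝ) 1) with hμ
  set h : ℝ → ℝ≥0∞ := fun s => ENNReal.ofReal (s ^ (-a) * g s ^ 2 / s) with hh
  have hhm : Measurable h := by rw [hh]; fun_prop
  have hhnt : ∀ s, h s ≠ ⊤ := fun s => ENNReal.ofReal_ne_top
  -- pointwise bound
  have hptwise : ∀ ρ ∈ Ioc (0:ℝ) 1,
      ENNReal.ofReal (ρ ^ (-(2*a)) * P ρ ^ 2 / ρ)
        ≤ ENNReal.ofReal (a⁻¹ * ρ ^ (-a - 1)) * ∫⁻ s in Ioc (0:ℝ) ρ, h s := by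
    intro ρ hρ
    have hρ0 : 0 < ρ := hρ.1
    have hCSa := CS (b := a) ha hρ0 g hg
    have h1 : ENNReal.ofReal (P ρ ^ 2)
        ≤ ENNReal.ofReal (ρ ^ a / a) * ∫⁻ s in Ioc (0:ℝ) ρ, h s :=
      (habs ρ hρ).trans hCSa
    have h2 : ENNReal.ofReal (ρ ^ (-(2*a)) * P ρ ^ 2 / ρ)
        = ENNReal.ofReal (ρ ^ (-(2*a)) / ρ) * ENNReal.ofReal (P ρ ^ 2) := by
      rw [← ENNReal.ofReal_mul (by positivity)]
      congr 1
      ring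
    rw [h2]
    calc ENNReal.ofReal (ρ ^ (-(2*a)) / ρ) * ENNReal.ofReal (P ρ ^ 2)
        ≤ ENNReal.ofReal (ρ ^ (-(2*a)) / ρ) *
            (ENNReal.ofReal (ρ ^ a / a) * ∫⁻ s in Ioc (0:ℝ) ρ, h s) :=
          mul_le_mul_right h1 _
      _ = (ENNReal.ofReal (ρ ^ (-(2*a)) / ρ) * ENNReal.ofReal (ρ ^ a / a)) *
            ∫⁻ s in Ioc (0:ℝ) ρ, h s := by rw [mul_assoc]
      _ = ENNReal.ofReal (a⁻¹ * ρ ^ (-a - 1)) * ∫⁻ s in Ioc (0:ℝ) ρ, h s := by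
          congr 1
          rw [← ENNReal.ofReal_mul (by positivity)]
          congr 1
          rw [div_mul_div_comm, ← Real.rpow_add hρ0]
          rw [show -(2*a) + a = -a - 1 + 1 by ring, Real.rpow_add hρ0, Real.rpow_one]
          field_simp
  -- swap setup
  set Q : ℝ → ℝ → ℝ≥0∞ := fun ρ s =>
    ENNReal.ofReal (a⁻¹ * ρ ^ (-a - 1)) * (if 0 < s ∧ s ≤ ρ then h s else 0) with hQ
  have hQm : Measurable (Function.uncurry Q) := by
    rw [hQ]
    apply Measurable.mul
    · fun_prop
    · exact Measurable.ite
        ((measurableSet_lt measurable_const measurable_snd).inter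
          (measurableSet_le measurable_snd measurable_fst))
        (hhm.comp measurable_snd) measurable_const
  have hstep : ∀ ρ ∈ Ioc (0:ℝ) 1,
      ENNReal.ofReal (a⁻¹ * ρ ^ (-a - 1)) * (∫⁻ s in Ioc (0:ℝ) ρ, h s)
        = ∫⁻ s, Q ρ s ∂μ := by
    intro ρ hρ
    rw [hQ]
    simp only []
    rw [lintegral_const_mul' _ _ ENNReal.ofReal_ne_top]
    congr 1
    have heqi : ∀ s : ℝ, (if 0 < s ∧ s ≤ ρ then h s else 0) = (Ioc 0 ρ).indicator h s := by
      intro s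
      simp [Set.indicator_apply, mem_Ioc]
    rw [lintegral_congr heqi, lintegral_indicator measurableSet_Ioc, hμ,
      Measure.restrict_restrict measurableSet_Ioc,
      inter_eq_self_of_subset_left (Ioc_subset_Ioc_right hρ.2)]
  have hswap : ∫⁻ ρ, ∫⁻ s, Q ρ s ∂μ ∂μ = ∫⁻ s, ∫⁻ ρ, Q ρ s ∂μ ∂μ :=
    lintegral_lintegral_swap hQm.aemeasurable
  have hinner : ∀ s ∈ Ioc (0:ℝ) 1,
      ∫⁻ ρ, Q ρ s ∂μ ≤ ENNReal.ofReal a⁻¹ * (ENNReal.ofReal (s ^ (-a) / a) * h s) := by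
    intro s hs
    have heqQ : ∀ ρ : ℝ, Q ρ s
        = ENNReal.ofReal a⁻¹ * ((Ici s).indicator (fun ρ => ENNReal.ofReal (ρ ^ (-a - 1))) ρ * h s) := by
      intro ρ
      rw [hQ]
      simp only [Set.indicator_apply, mem_Ici]
      by_cases hc : s ≤ ρ
      · simp only [hc, if_true, hs.1, and_self, true_and]
        rw [ENNReal.ofReal_mul (by positivity)]
        ring
      · simp [hc]
    calc ∫⁻ ρ, Q ρ s ∂μ
        = ENNReal.ofReal a⁻¹ * ∫⁻ ρ, (Ici s).indicator (fun ρ => ENNReal.ofReal (ρ ^ (-a - 1))) ρ * h s ∂μ := by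
          rw [← lintegral_const_mul' _ _ ENNReal.ofReal_ne_top]
          exact lintegral_congr heqQ
      _ = ENNReal.ofReal a⁻¹ * ((∫⁻ ρ, (Ici s).indicator (fun ρ => ENNReal.ofReal (ρ ^ (-a - 1))) ρ ∂μ) * h s) := by
          rw [lintegral_mul_const' _ _ (hhnt s)]
      _ ≤ ENNReal.ofReal a⁻¹ * (ENNReal.ofReal (s ^ (-a) / a) * h s) := by
          apply mul_le_mul_right
          apply mul_le_mul_left
          rw [lintegral_indicator measurableSet_Ici, hμ,
            Measure.restrict_restrict measurableSet_Ici]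
          have hIcc : Ici s ∩ Ioc (0:ℝ) 1 = Icc s 1 := by
            ext ρ
            simp only [mem_inter_iff, mem_Ici, mem_Ioc, mem_Icc]
            exact ⟨fun ⟨h1, _, h3⟩ => ⟨h1, h3⟩, fun ⟨h1, h3⟩ => ⟨h1, lt_of_lt_of_le hs.1 h1, h3⟩⟩
          rw [hIcc, ← Measure.restrict_congr_set Ioc_ae_eq_Icc]
          exact lint_tail ha hs.1 hs.2
  have hconst : ∀ s ∈ Ioc (0:ℝ) 1,
      ENNReal.ofReal a⁻¹ * (ENNReal.ofReal (s ^ (-a) / a) * h s)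
        = ENNReal.ofReal a⁻¹ * (ENNReal.ofReal a⁻¹ * ENNReal.ofReal (W s)) := by
    intro s hs
    congr 1
    rw [hh]
    simp only []
    rw [← ENNReal.ofReal_mul (div_nonneg (Real.rpow_nonneg hs.1.le _) ha.le),
      ← ENNReal.ofReal_mul (inv_nonneg.2 ha.le)]
    congr 1
    rw [hW]
    simp only []
    rw [show (-(2*a)) = -a + -a by ring, Real.rpow_add hs.1]
    field_simp
  -- T bound
  have hT : ∫⁻ ρ in Ioc (0:ℝ) 1, ENNReal.ofReal (ρ ^ (-(2*a)) * P ρ ^ 2 / ρ)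
      ≤ ENNReal.ofReal (a⁻¹ ^ 2 * I1) := by
    calc ∫⁻ ρ in Ioc (0:ℝ) 1, ENNReal.ofReal (ρ ^ (-(2*a)) * P ρ ^ 2 / ρ)
        ≤ ∫⁻ ρ, ∫⁻ s, Q ρ s ∂μ ∂μ := by
          rw [hμ]
          refine lintegral_mono_ae ((ae_restrict_iff' measurableSet_Ioc).2
            (ae_of_all _ fun ρ hρ => ?_))
          exact le_of_le_of_eq (hptwise ρ hρ) (hstep ρ hρ)
      _ = ∫⁻ s, ∫⁻ ρ, Q ρ s ∂μ ∂μ := hswap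
      _ ≤ ∫⁻ s, ENNReal.ofReal a⁻¹ * (ENNReal.ofReal a⁻¹ * ENNReal.ofReal (W s)) ∂μ := by
          rw [hμ]
          refine lintegral_mono_ae ((ae_restrict_iff' measurableSet_Ioc).2
            (ae_of_all _ fun s hs => ?_))
          exact le_of_le_of_eq (hinner s hs) (hconst s hs)
      _ = ENNReal.ofReal a⁻¹ * (ENNReal.ofReal a⁻¹ * ∫⁻ s, ENNReal.ofReal (W s) ∂μ) := by
          rw [lintegral_const_mul' _ _ ENNReal.ofReal_ne_top,
            lintegral_const_mul' _ _ ENNReal.ofReal_ne_top]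
      _ = ENNReal.ofReal (a⁻¹ ^ 2 * I1) := by
          rw [hμ, hLW, ← ENNReal.ofReal_mul (by positivity),
            ← ENNReal.ofReal_mul (by positivity)]
          congr 1
          ring
  -- fun_prop of the Hardy integrand
  set k : ℝ → ℝ → ℝ := fun ρ s => if 0 < s ∧ s ≤ ρ then g s / s else 0 with hk
  have hkm : Measurable (Function.uncurry k) := by
    rw [hk]
    exact Measurable.ite
      ((measurableSet_lt measurable_const measurable_snd).inter
        (measurableSet_le measurable_snd measurable_fst))
      ((hg.comp measurable_snd).div measurable_snd) measurable_const
  have hSM : StronglyMeasurable fun ρ => ∫ s, k ρ s ∂μ :=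
    hkm.stronglyMeasurable.integral_prod_right
  have heqP : ∀ ρ ∈ Ioc (0:ℝ) 1, (∫ s, k ρ s ∂μ) = P ρ := by
    intro ρ hρ
    have heqi : ∀ s : ℝ, k ρ s = (Ioc 0 ρ).indicator (fun s => g s / s) s := by
      intro s
      rw [hk]
      simp [Set.indicator_apply, mem_Ioc]
    rw [integral_congr_ae (ae_of_all _ heqi), integral_indicator measurableSet_Ioc, hμ,
      Measure.restrict_restrict measurableSet_Ioc,
      inter_eq_self_of_subset_left (Ioc_subset_Ioc_right hρ.2), hP]
  have hW3m : AEStronglyMeasurable (fun ρ => ρ ^ (-(2*a)) * P ρ ^ 2 / ρ) μ := by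
    have hm : Measurable fun ρ => ρ ^ (-(2*a)) * (∫ s, k ρ s ∂μ) ^ 2 / ρ := by
      have h1 : Measurable fun ρ : ℝ => ρ ^ (-(2*a)) := by fun_prop
      exact (h1.mul (hSM.measurable.pow_const 2)).div measurable_id
    refine hm.aestronglyMeasurable.congr ?_
    rw [hμ]
    refine (ae_restrict_iff' measurableSet_Ioc).2 (ae_of_all _ fun ρ hρ => ?_)
    show ρ ^ (-(2*a)) * (∫ s, k ρ s ∂μ) ^ 2 / ρ = ρ ^ (-(2*a)) * P ρ ^ 2 / ρ
    rw [heqP ρ hρ]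
  have hW3int : IntegrableOn (fun ρ => ρ ^ (-(2*a)) * P ρ ^ 2 / ρ) (Ioc (0:ℝ) 1) := by
    refine ⟨hW3m, ?_⟩
    rw [hasFiniteIntegral_iff_norm]
    refine lt_of_eq_of_lt ?_ (lt_of_le_of_lt hT ENNReal.ofReal_lt_top)
    refine lintegral_congr_ae ((ae_restrict_iff' measurableSet_Ioc).2
      (ae_of_all _ fun ρ hρ => ?_))
    show ENNReal.ofReal ‖ρ ^ (-(2*a)) * P ρ ^ 2 / ρ‖ = ENNReal.ofReal (ρ ^ (-(2*a)) * P ρ ^ 2 / ρ)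
    rw [Real.norm_eq_abs, abs_of_nonneg
      (div_nonneg (mul_nonneg (Real.rpow_nonneg hρ.1.le _) (sq_nonneg _)) hρ.1.le)]
  refine ⟨hInt1, hpart2, hW3int, ?_⟩
  -- final inequality
  have hgoal : ENNReal.ofReal (∫ ρ in Ioc (0:ℝ) 1, ρ ^ (-(2*a)) * P ρ ^ 2 / ρ)
      ≤ ENNReal.ofReal (a⁻¹ ^ 2 * I1) := by
    rw [ofReal_integral_eq_lintegral_ofReal hW3int
      ((ae_restrict_iff' measurableSet_Ioc).2 (ae_of_all _ fun ρ hρ =>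
        div_nonneg (mul_nonneg (Real.rpow_nonneg hρ.1.le _) (sq_nonneg _)) hρ.1.le))]
    exact hT
  exact (ENNReal.ofReal_le_ofReal_iff (by positivity)).1 hgoal

end WOCL

open WOCL


/-- Two-variable version of the weighted ODE lemma at a corner: for weights `a₁ > 0`, `a₂ ∈ ℝ`
and `f` with finite weighted norm `I` on `(0,1]²`, the solution
`u(ρ₁,ρ₂) = ∫_{ρ₁}¹ f(s,ρ₂) ds/s` of `ρ₁ ∂_{ρ₁} u = -f` has a leading term
`c(ρ₂) = ∫₀¹ f(s,ρ₂) ds/s` (defined by an a.e. absolutely convergent integral) with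
`∫₀¹ ρ₂^{-2a₂} |c|² dρ₂/ρ₂ ≤ (2a₁)⁻¹ I`, and
`∫∫ ρ₁^{-2a₁} ρ₂^{-2a₂} |u - c|² (dρ₁/ρ₁)(dρ₂/ρ₂) ≤ a₁⁻² I`. -/
theorem weighted_ode_corner_leading_term (a₁ a₂ : ℝ) (ha₁ : 0 < a₁)
    (f : ℝ → ℝ → ℝ) (hf : Measurable (Function.uncurry f))
    (hI : IntegrableOn
      (fun p : ℝ × ℝ =>
        p.1 ^ (-(2 * a₁)) * p.2 ^ (-(2 * a₂)) * (f p.1 p.2) ^ 2 / (p.1 * p.2))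
      (Ioc 0 1 ×ˢ Ioc 0 1)) :
    (∀ᵐ ρ₂ ∂(volume.restrict (Ioc (0 : ℝ) 1)),
      IntegrableOn (fun s => f s ρ₂ / s) (Ioc (0 : ℝ) 1)) ∧
    IntegrableOn
      (fun ρ₂ => ρ₂ ^ (-(2 * a₂)) * (∫ s in Ioc (0 : ℝ) 1, f s ρ₂ / s) ^ 2 / ρ₂)
      (Ioc (0 : ℝ) 1) ∧
    (∫ ρ₂ in Ioc (0 : ℝ) 1, ρ₂ ^ (-(2 * a₂)) * (∫ s in Ioc (0 : ℝ) 1, f s ρ₂ / s) ^ 2 / ρ₂) ≤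
      (2 * a₁)⁻¹ *
        (∫ p in (Ioc (0 : ℝ) 1 ×ˢ Ioc (0 : ℝ) 1),
          p.1 ^ (-(2 * a₁)) * p.2 ^ (-(2 * a₂)) * (f p.1 p.2) ^ 2 / (p.1 * p.2)) ∧
    IntegrableOn
      (fun p : ℝ × ℝ =>
        p.1 ^ (-(2 * a₁)) * p.2 ^ (-(2 * a₂)) *
          ((∫ s in Ioc p.1 1, f s p.2 / s) - ∫ s in Ioc (0 : ℝ) 1, f s p.2 / s) ^ 2
          / (p.1 * p.2))
      (Ioc 0 1 ×ˢ Ioc 0 1) ∧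
    (∫ p in (Ioc (0 : ℝ) 1 ×ˢ Ioc (0 : ℝ) 1),
        p.1 ^ (-(2 * a₁)) * p.2 ^ (-(2 * a₂)) *
          ((∫ s in Ioc p.1 1, f s p.2 / s) - ∫ s in Ioc (0 : ℝ) 1, f s p.2 / s) ^ 2
          / (p.1 * p.2)) ≤
      a₁⁻¹ ^ 2 *
        (∫ p in (Ioc (0 : ℝ) 1 ×ˢ Ioc (0 : ℝ) 1),
          p.1 ^ (-(2 * a₁)) * p.2 ^ (-(2 * a₂)) * (f p.1 p.2) ^ 2 / (p.1 * p.2)) := by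
  classical
  have key : ∀ A B Q x y : ℝ, A * B * Q / (x * y) = B / y * (A * Q / x) := by
    intros A B Q x y
    rw [div_eq_mul_inv, div_eq_mul_inv, div_eq_mul_inv, mul_inv]
    ring
  set μ : Measure ℝ := volume.restrict (Ioc (0:ℝ) 1) with hμ
  have hprodm : (volume : Measure (ℝ × ℝ)).restrict (Ioc (0:ℝ) 1 ×ˢ Ioc (0:ℝ) 1) = μ.prod μ := by
    rw [hμ, Measure.prod_restrict, ← Measure.volume_eq_prod]
  set F : ℝ × ℝ → ℝ :=
    fun p => p.1 ^ (-(2 * a₁)) * p.2 ^ (-(2 * a₂)) * f p.1 p.2 ^ 2 / (p.1 * p.2) with hFdef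
  have hIμ : Integrable F (μ.prod μ) := by rw [← hprodm]; exact hI
  set w : ℝ → ℝ := fun y => y ^ (-(2 * a₂)) / y with hwdef
  set G : ℝ → ℝ → ℝ := fun y x => x ^ (-(2 * a₁)) * f x y ^ 2 / x with hGdef
  have hFeq : ∀ x y : ℝ, F (x, y) = w y * G y x := fun x y => key _ _ _ _ _
  have haeS : ∀ᵐ y ∂μ, y ∈ Ioc (0:ℝ) 1 := ae_restrict_mem measurableSet_Ioc
  have haeS2 : ∀ᵐ p ∂(μ.prod μ), p ∈ Ioc (0:ℝ) 1 ×ˢ Ioc (0:ℝ) 1 := by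
    rw [← hprodm]
    exact ae_restrict_mem (measurableSet_Ioc.prod measurableSet_Ioc)
  have hwpos : ∀ y ∈ Ioc (0:ℝ) 1, 0 < w y := fun y hy =>
    div_pos (Real.rpow_pos_of_pos hy.1 _) hy.1
  have hslice : ∀ᵐ y ∂μ, Integrable (fun x => F (x, y)) μ := hIμ.prod_left_ae
  have hGint : ∀ᵐ y ∂μ, Integrable (G y) μ := by
    filter_upwards [hslice, haeS] with y hy hyS
    have heq : (fun x => F (x, y)) = fun x => w y * G y x := funext fun x => hFeq x y
    rw [heq] at hy
    exact (integrable_const_mul_iff (isUnit_iff_ne_zero.2 (hwpos y hyS).ne') _).1 hy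
  have hone : ∀ᵐ y ∂μ,
      IntegrableOn (fun s => f s y / s) (Ioc (0:ℝ) 1) ∧
      (∫ s in Ioc (0:ℝ) 1, f s y / s) ^ 2
        ≤ (2 * a₁)⁻¹ * ∫ s in Ioc (0:ℝ) 1, s ^ (-(2 * a₁)) * f s y ^ 2 / s ∧
      IntegrableOn
        (fun ρ => ρ ^ (-(2 * a₁)) * (∫ s in Ioc (0:ℝ) ρ, f s y / s) ^ 2 / ρ) (Ioc (0:ℝ) 1) ∧
      (∫ ρ in Ioc (0:ℝ) 1, ρ ^ (-(2 * a₁)) * (∫ s in Ioc (0:ℝ) ρ, f s y / s) ^ 2 / ρ)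
        ≤ a₁⁻¹ ^ 2 * ∫ s in Ioc (0:ℝ) 1, s ^ (-(2 * a₁)) * f s y ^ 2 / s := by
    filter_upwards [hGint] with y hy
    exact oneD ha₁ (fun s => f s y) (hf.comp (measurable_id.prodMk measurable_const)) hy
  -- J and weighted slice integrals
  have hJnn : ∀ y : ℝ, 0 ≤ ∫ x, G y x ∂μ := fun y => by
    rw [hμ]
    refine setIntegral_nonneg measurableSet_Ioc fun x hx => ?_
    exact div_nonneg (mul_nonneg (Real.rpow_nonneg hx.1.le _) (sq_nonneg _)) hx.1.le
  have hwJ : ∀ y : ℝ, ∫ x, F (x, y) ∂μ = w y * ∫ x, G y x ∂μ := fun y => by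
    rw [← integral_const_mul]
    exact integral_congr_ae (ae_of_all _ fun x => hFeq x y)
  have hD2int : Integrable (fun y => (2 * a₁)⁻¹ * ∫ x, F (x, y) ∂μ) μ :=
    (hIμ.integral_prod_right).const_mul _
  -- measurability of c
  have hcSM : StronglyMeasurable fun y => ∫ s, f s y / s ∂μ := by
    have hm : Measurable (Function.uncurry fun y s => f s y / s) := by
      have : Measurable fun q : ℝ × ℝ => f q.2 q.1 :=
        hf.comp (measurable_snd.prodMk measurable_fst)
      exact this.div measurable_snd
    exact hm.stronglyMeasurable.integral_prod_right
  have hφ₂m : AEStronglyMeasurable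
      (fun y => y ^ (-(2 * a₂)) * (∫ s in Ioc (0:ℝ) 1, f s y / s) ^ 2 / y) μ := by
    have h1 : Measurable fun y : ℝ => y ^ (-(2 * a₂)) := by fun_prop
    exact (((h1.mul (hcSM.measurable.pow_const 2)).div measurable_id)).aestronglyMeasurable
  have hφ₂bound : ∀ᵐ y ∂μ,
      y ^ (-(2 * a₂)) * (∫ s in Ioc (0:ℝ) 1, f s y / s) ^ 2 / y
        ≤ (2 * a₁)⁻¹ * ∫ x, F (x, y) ∂μ := by
    filter_upwards [hone, haeS] with y hy hyS
    have h1 : y ^ (-(2 * a₂)) * (∫ s in Ioc (0:ℝ) 1, f s y / s) ^ 2 / y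
        = w y * (∫ s in Ioc (0:ℝ) 1, f s y / s) ^ 2 := by
      rw [hwdef]; ring
    have h2 : ∫ s in Ioc (0:ℝ) 1, s ^ (-(2 * a₁)) * f s y ^ 2 / s = ∫ x, G y x ∂μ := rfl
    rw [h1, hwJ y]
    calc w y * (∫ s in Ioc (0:ℝ) 1, f s y / s) ^ 2
        ≤ w y * ((2 * a₁)⁻¹ * ∫ s in Ioc (0:ℝ) 1, s ^ (-(2 * a₁)) * f s y ^ 2 / s) :=
          mul_le_mul_of_nonneg_left hy.2.1 (hwpos y hyS).le
      _ = (2 * a₁)⁻¹ * (w y * ∫ x, G y x ∂μ) := by rw [h2]; ring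
  have hφ₂nn : ∀ᵐ y ∂μ,
      0 ≤ y ^ (-(2 * a₂)) * (∫ s in Ioc (0:ℝ) 1, f s y / s) ^ 2 / y := by
    filter_upwards [haeS] with y hyS
    exact div_nonneg (mul_nonneg (Real.rpow_nonneg hyS.1.le _) (sq_nonneg _)) hyS.1.le
  have hφ₂int : Integrable
      (fun y => y ^ (-(2 * a₂)) * (∫ s in Ioc (0:ℝ) 1, f s y / s) ^ 2 / y) μ := by
    refine hD2int.mono hφ₂m ?_
    filter_upwards [hφ₂bound, hφ₂nn] with y hb hnn
    rw [Real.norm_eq_abs, Real.norm_eq_abs, abs_of_nonneg hnn]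
    exact hb.trans (le_abs_self _)
  have hpart2 :
      (∫ ρ₂ in Ioc (0:ℝ) 1, ρ₂ ^ (-(2 * a₂)) * (∫ s in Ioc (0 : ℝ) 1, f s ρ₂ / s) ^ 2 / ρ₂)
        ≤ (2 * a₁)⁻¹ * ∫ p, F p ∂(μ.prod μ) := by
    calc ∫ ρ₂ in Ioc (0:ℝ) 1, ρ₂ ^ (-(2 * a₂)) * (∫ s in Ioc (0 : ℝ) 1, f s ρ₂ / s) ^ 2 / ρ₂
        ≤ ∫ y, (2 * a₁)⁻¹ * ∫ x, F (x, y) ∂μ ∂μ :=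
          integral_mono_ae hφ₂int hD2int hφ₂bound
      _ = (2 * a₁)⁻¹ * ∫ y, ∫ x, F (x, y) ∂μ ∂μ := integral_const_mul _ _
      _ = (2 * a₁)⁻¹ * ∫ p, F p ∂(μ.prod μ) := by rw [integral_prod_symm F hIμ]
  -- ## part 3 setup
  set V : ℝ × ℝ → ℝ := fun p =>
    p.1 ^ (-(2 * a₁)) * p.2 ^ (-(2 * a₂)) * (∫ s in Ioc (0:ℝ) p.1, f s p.2 / s) ^ 2
      / (p.1 * p.2) with hVdef
  set R : ℝ × ℝ → ℝ := fun p =>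
    p.1 ^ (-(2 * a₁)) * p.2 ^ (-(2 * a₂)) *
      ((∫ s in Ioc p.1 1, f s p.2 / s) - ∫ s in Ioc (0 : ℝ) 1, f s p.2 / s) ^ 2
      / (p.1 * p.2) with hRdef
  have hone2 : ∀ᵐ p ∂(μ.prod μ),
      IntegrableOn (fun s => f s p.2 / s) (Ioc (0:ℝ) 1) :=
    (Measure.quasiMeasurePreserving_snd).ae (by filter_upwards [hone] with y hy using hy.1)
  have hRV : R =ᵐ[μ.prod μ] V := by
    filter_upwards [haeS2, hone2] with p hpS hp2
    have hx : p.1 ∈ Ioc (0:ℝ) 1 := hpS.1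
    have hsplit : ∫ s in Ioc (0:ℝ) 1, f s p.2 / s
        = (∫ s in Ioc (0:ℝ) p.1, f s p.2 / s) + ∫ s in Ioc p.1 1, f s p.2 / s := by
      rw [← Ioc_union_Ioc_eq_Ioc hx.1.le hx.2]
      exact setIntegral_union (Ioc_disjoint_Ioc_of_le le_rfl) measurableSet_Ioc
        (hp2.mono_set (Ioc_subset_Ioc_right hx.2))
        (hp2.mono_set (Ioc_subset_Ioc_left hx.1.le))
    rw [hRdef, hVdef]
    simp only []
    rw [hsplit]
    ring
  -- measurability of V
  have hVm : AEStronglyMeasurable V (μ.prod μ) := by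
    set k2 : (ℝ × ℝ) → ℝ → ℝ := fun p s => if 0 < s ∧ s ≤ p.1 then f s p.2 / s else 0 with hk2
    have hk2m : Measurable (Function.uncurry k2) := by
      rw [hk2]
      refine Measurable.ite ?_ ?_ measurable_const
      · exact (measurableSet_lt measurable_const measurable_snd).inter
          (measurableSet_le measurable_snd (measurable_fst.comp measurable_fst))
      · exact (hf.comp (measurable_snd.prodMk
          (measurable_snd.comp measurable_fst))).div measurable_snd
    have hPm : StronglyMeasurable fun p : ℝ × ℝ => ∫ s, k2 p s ∂μ :=
      hk2m.stronglyMeasurable.integral_prod_right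
    have hm : Measurable fun p : ℝ × ℝ =>
        p.1 ^ (-(2 * a₁)) * p.2 ^ (-(2 * a₂)) * (∫ s, k2 p s ∂μ) ^ 2 / (p.1 * p.2) := by
      have h1 : Measurable fun p : ℝ × ℝ => p.1 ^ (-(2 * a₁)) := by fun_prop
      have h2 : Measurable fun p : ℝ × ℝ => p.2 ^ (-(2 * a₂)) := by fun_prop
      exact ((h1.mul h2).mul (hPm.measurable.pow_const 2)).div
        (measurable_fst.mul measurable_snd)
    refine hm.aestronglyMeasurable.congr ?_
    filter_upwards [haeS2] with p hpS
    have hx : p.1 ∈ Ioc (0:ℝ) 1 := hpS.1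
    have heqi : ∀ s : ℝ, k2 p s = (Ioc 0 p.1).indicator (fun s => f s p.2 / s) s := by
      intro s
      rw [hk2]
      simp [Set.indicator_apply, mem_Ioc]
    have hint : (∫ s, k2 p s ∂μ) = ∫ s in Ioc (0:ℝ) p.1, f s p.2 / s := by
      rw [integral_congr_ae (ae_of_all _ heqi), integral_indicator measurableSet_Ioc, hμ,
        Measure.restrict_restrict measurableSet_Ioc,
        inter_eq_self_of_subset_left (Ioc_subset_Ioc_right hx.2)]
    rw [hint, hVdef]
  -- slice form of V
  have hVsliceEq : ∀ y x : ℝ, V (x, y)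
      = w y * (x ^ (-(2 * a₁)) * (∫ s in Ioc (0:ℝ) x, f s y / s) ^ 2 / x) := by
    intro y x
    rw [hVdef, hwdef]
    exact key _ _ _ _ _
  have hVslice : ∀ᵐ y ∂μ, Integrable (fun x => V (x, y)) μ := by
    filter_upwards [hone] with y hy
    have heq : (fun x => V (x, y)) = fun x =>
        w y * (x ^ (-(2 * a₁)) * (∫ s in Ioc (0:ℝ) x, f s y / s) ^ 2 / x) :=
      funext fun x => hVsliceEq y x
    rw [heq]
    exact hy.2.2.1.const_mul _
  have hVnormEq : ∀ᵐ y ∂μ, ∫ x, ‖V (x, y)‖ ∂μ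
      = w y * ∫ x, x ^ (-(2 * a₁)) * (∫ s in Ioc (0:ℝ) x, f s y / s) ^ 2 / x ∂μ := by
    filter_upwards [haeS] with y hyS
    rw [← integral_const_mul]
    refine integral_congr_ae ?_
    filter_upwards [haeS] with x hxS
    have hnn : 0 ≤ V (x, y) := by
      rw [hVsliceEq y x]
      exact mul_nonneg (hwpos y hyS).le
        (div_nonneg (mul_nonneg (Real.rpow_nonneg hxS.1.le _) (sq_nonneg _)) hxS.1.le)
    rw [Real.norm_eq_abs, abs_of_nonneg hnn, hVsliceEq y x]
  have hVintEq : ∀ᵐ y ∂μ, ∫ x, V (x, y) ∂μ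
      = w y * ∫ x, x ^ (-(2 * a₁)) * (∫ s in Ioc (0:ℝ) x, f s y / s) ^ 2 / x ∂μ := by
    refine ae_of_all _ fun y => ?_
    rw [← integral_const_mul]
    exact integral_congr_ae (ae_of_all _ fun x => hVsliceEq y x)
  have hD3int : Integrable (fun y => a₁⁻¹ ^ 2 * ∫ x, F (x, y) ∂μ) μ :=
    (hIμ.integral_prod_right).const_mul _
  have hbound3 : ∀ᵐ y ∂μ,
      w y * ∫ x, x ^ (-(2 * a₁)) * (∫ s in Ioc (0:ℝ) x, f s y / s) ^ 2 / x ∂μ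
        ≤ a₁⁻¹ ^ 2 * ∫ x, F (x, y) ∂μ := by
    filter_upwards [hone, haeS] with y hy hyS
    rw [hwJ y]
    calc w y * ∫ x, x ^ (-(2 * a₁)) * (∫ s in Ioc (0:ℝ) x, f s y / s) ^ 2 / x ∂μ
        ≤ w y * (a₁⁻¹ ^ 2 * ∫ s in Ioc (0:ℝ) 1, s ^ (-(2 * a₁)) * f s y ^ 2 / s) :=
          mul_le_mul_of_nonneg_left hy.2.2.2 (hwpos y hyS).le
      _ = a₁⁻¹ ^ 2 * (w y * ∫ x, G y x ∂μ) := by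
          rw [show (∫ s in Ioc (0:ℝ) 1, s ^ (-(2 * a₁)) * f s y ^ 2 / s)
            = ∫ x, G y x ∂μ from rfl]
          ring
  have hVnorm : Integrable (fun y => ∫ x, ‖V (x, y)‖ ∂μ) μ := by
    have hm : AEStronglyMeasurable (fun y => ∫ x, ‖V (x, y)‖ ∂μ) μ :=
      (hVm.prod_swap.norm).integral_prod_right'
    refine hD3int.mono hm ?_
    filter_upwards [hVnormEq, hbound3] with y heq hb
    rw [Real.norm_eq_abs, Real.norm_eq_abs,
      abs_of_nonneg (integral_nonneg fun x => norm_nonneg _), heq]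
    exact hb.trans (le_abs_self _)
  have hVint : Integrable V (μ.prod μ) := (integrable_prod_iff' hVm).2 ⟨hVslice, hVnorm⟩
  have hRint : Integrable R (μ.prod μ) := hVint.congr hRV.symm
  have hfinal3 : ∫ p, R p ∂(μ.prod μ) ≤ a₁⁻¹ ^ 2 * ∫ p, F p ∂(μ.prod μ) := by
    rw [integral_congr_ae hRV, integral_prod_symm V hVint]
    calc ∫ y, ∫ x, V (x, y) ∂μ ∂μ
        ≤ ∫ y, a₁⁻¹ ^ 2 * ∫ x, F (x, y) ∂μ ∂μ := by
          refine integral_mono_ae hVint.integral_prod_right hD3int ?_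
          filter_upwards [hVintEq, hbound3] with y heq hb
          rw [heq]; exact hb
      _ = a₁⁻¹ ^ 2 * ∫ y, ∫ x, F (x, y) ∂μ ∂μ := integral_const_mul _ _
      _ = a₁⁻¹ ^ 2 * ∫ p, F p ∂(μ.prod μ) := by rw [integral_prod_symm F hIμ]
  -- ## assemble
  have e1 : (∫ p in Ioc (0:ℝ) 1 ×ˢ Ioc (0:ℝ) 1, F p) = ∫ p, F p ∂(μ.prod μ) := by
    rw [hprodm]
  have e2 : (∫ p in Ioc (0:ℝ) 1 ×ˢ Ioc (0:ℝ) 1, R p) = ∫ p, R p ∂(μ.prod μ) := by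
    rw [hprodm]
  refine ⟨?_, hφ₂int, ?_, ?_, ?_⟩
  · filter_upwards [hone] with y hy using hy.1
  · rw [e1]; exact hpart2
  · show Integrable R ((volume : Measure (ℝ × ℝ)).restrict (Ioc (0:ℝ) 1 ×ˢ Ioc (0:ℝ) 1))
    rw [hprodm]; exact hRint
  · rw [e1, e2]; exact hfinal3
end

section
/- Let b₁ < b₂ be real numbers and let f : (0,1]×(0,1] → ℝ be measurable with J := ∫₀¹∫₀¹ ρ₁^{−2b₁} ρ₂^{−2b₂} |f(ρ₁,ρ₂)|² (dρ₁/ρ₁)(dρ₂/ρ₂) < ∞. Define u(ρ₁,ρ₂) := ∫_{ρ₁}¹ f(ρ₁/t, t·ρ₂) dt/t (the integrand is defined since ρ₁/t ∈ [ρ₁,1] and tρ₂ ∈ (0,ρ₂] for t ∈ [ρ₁,1]). Then the defining integral converges absolutely for almost every (ρ₁,ρ₂) ∈ (0,1]², and ∫₀¹∫₀¹ ρ₁^{−2b₁} ρ₂^{−2b₂} |u(ρ₁,ρ₂)|² (dρ₁/ρ₁)(dρ₂/ρ₂) ≤ (b₂ − b₁)^{−2} · J. -/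
open MeasureTheory Set
open scoped ENNReal

lemma haar_scale (c : ℝ) (hc : 0 < c) (H : ℝ → ℝ≥0∞) (hH : Measurable H) (a : ℝ) :
    ∫⁻ x in Ioc 0 a, ENNReal.ofReal x⁻¹ * H (c * x) =
      ∫⁻ y in Ioc 0 (c * a), ENNReal.ofReal y⁻¹ * H y := by
  set g : ℝ → ℝ≥0∞ := (Ioc 0 (c * a)).indicator
    (fun y => ENNReal.ofReal c * (ENNReal.ofReal y⁻¹ * H y)) with hg_def
  have hg : Measurable g :=
    ((measurable_const.mul ((ENNReal.measurable_ofReal.comp measurable_inv).mul hH))).indicator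
      measurableSet_Ioc
  have hmem : ∀ x : ℝ, c * x ∈ Ioc 0 (c * a) ↔ x ∈ Ioc 0 a := by
    intro x
    constructor
    · rintro ⟨h1, h2⟩
      constructor
      · nlinarith
      · nlinarith
    · rintro ⟨h1, h2⟩
      exact ⟨mul_pos hc h1, by nlinarith⟩
  have key : ∀ x : ℝ, (Ioc 0 a).indicator (fun x => ENNReal.ofReal x⁻¹ * H (c * x)) x
      = g (c * x) := by
    intro x
    by_cases hx : x ∈ Ioc 0 a
    · rw [indicator_of_mem hx, hg_def, indicator_of_mem ((hmem x).2 hx)]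
      have hxpos : 0 < x := hx.1
      have : (c * x)⁻¹ = c⁻¹ * x⁻¹ := by rw [mul_inv]
      rw [this, ENNReal.ofReal_mul (by positivity), ← mul_assoc, ← mul_assoc,
        ← ENNReal.ofReal_mul hc.le, mul_inv_cancel₀ hc.ne', ENNReal.ofReal_one, one_mul]
    · rw [indicator_of_notMem hx, hg_def, indicator_of_notMem (fun h => hx ((hmem x).1 h))]
  calc ∫⁻ x in Ioc 0 a, ENNReal.ofReal x⁻¹ * H (c * x)
      = ∫⁻ x, (Ioc 0 a).indicator (fun x => ENNReal.ofReal x⁻¹ * H (c * x)) x := by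
        rw [← lintegral_indicator measurableSet_Ioc _]
    _ = ∫⁻ x, g (c * x) := by simp_rw [key]
    _ = ∫⁻ y, g y ∂(Measure.map (c * ·) volume) := by
        rw [lintegral_map hg (measurable_const_mul c)]
    _ = ENNReal.ofReal c⁻¹ * ∫⁻ y, g y := by
        rw [Real.map_volume_mul_left hc.ne', abs_inv, abs_of_pos hc, lintegral_smul_measure, smul_eq_mul]
    _ = ENNReal.ofReal c⁻¹ * (ENNReal.ofReal c * ∫⁻ y in Ioc 0 (c * a),
          ENNReal.ofReal y⁻¹ * H y) := by
        rw [hg_def, lintegral_indicator measurableSet_Ioc _, lintegral_const_mul]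
        exact (ENNReal.measurable_ofReal.comp measurable_inv).mul hH
    _ = ∫⁻ y in Ioc 0 (c * a), ENNReal.ofReal y⁻¹ * H y := by
        rw [← mul_assoc, ← ENNReal.ofReal_mul (by positivity), inv_mul_cancel₀ hc.ne',
          ENNReal.ofReal_one, one_mul]

lemma pow_lintegral (ε : ℝ) (hε : 0 < ε) :
    ∫⁻ t in Ioc (0:ℝ) 1, ENNReal.ofReal (t ^ (ε - 1)) = ENNReal.ofReal ε⁻¹ := by
  have hint : IntegrableOn (fun t : ℝ => t ^ (ε - 1)) (Ioc 0 1) := by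
    rw [← intervalIntegrable_iff_integrableOn_Ioc_of_le (by norm_num : (0:ℝ) ≤ 1)]
    exact intervalIntegral.intervalIntegrable_rpow' (by linarith)
  rw [← ofReal_integral_eq_lintegral_ofReal hint]
  · congr 1
    rw [← intervalIntegral.integral_of_le (by norm_num : (0:ℝ) ≤ 1)]
    rw [integral_rpow (Or.inl (by linarith))]
    rw [sub_add_cancel, Real.one_rpow, Real.zero_rpow hε.ne']
    ring
  · filter_upwards [self_mem_ae_restrict measurableSet_Ioc] with t ht
    exact Real.rpow_nonneg ht.1.le _

lemma lintegral_sq_cs {α : Type*} [MeasurableSpace α] (μ : Measure α) (φ ψ : α → ℝ≥0∞)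
    (hφ : AEMeasurable φ μ) (hψ : AEMeasurable ψ μ) :
    (∫⁻ a, φ a * ψ a ∂μ) ^ 2 ≤ (∫⁻ a, φ a ^ 2 ∂μ) * (∫⁻ a, ψ a ^ 2 ∂μ) := by
  have hpq : (2:ℝ).HolderConjugate 2 := Real.HolderConjugate.two_two
  have h := ENNReal.lintegral_mul_le_Lp_mul_Lq μ hpq hφ hψ
  have h2 : ∀ x : ℝ≥0∞, x ^ (2:ℝ) = x ^ (2:ℕ) := fun x => by
    rw [← ENNReal.rpow_natCast x 2]; norm_num
  simp_rw [Pi.mul_apply, h2] at h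
  calc (∫⁻ a, φ a * ψ a ∂μ) ^ 2
      ≤ ((∫⁻ a, φ a ^ 2 ∂μ) ^ (1/(2:ℝ)) * (∫⁻ a, ψ a ^ 2 ∂μ) ^ (1/(2:ℝ))) ^ 2 :=
        pow_le_pow_left₀ zero_le h 2
    _ = (∫⁻ a, φ a ^ 2 ∂μ) * (∫⁻ a, ψ a ^ 2 ∂μ) := by
        rw [mul_pow, ← ENNReal.rpow_natCast (_ ^ (1/(2:ℝ))) 2, ← ENNReal.rpow_natCast
          ((∫⁻ a, ψ a ^ 2 ∂μ) ^ (1/(2:ℝ))) 2, ← ENNReal.rpow_mul, ← ENNReal.rpow_mul]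
        norm_num

lemma cs_step (ε : ℝ) (hε : 0 < ε) (p₁ : ℝ) (hp₁ : 0 < p₁) (g : ℝ → ℝ) (hg : Measurable g) :
    (∫⁻ t in Ioc p₁ 1, ENNReal.ofReal |g t / t|) ^ 2 ≤
      ENNReal.ofReal ε⁻¹ * ∫⁻ t in Ioc p₁ 1, ENNReal.ofReal (t ^ (-ε) * (g t) ^ 2 / t) := by
  set μ := volume.restrict (Ioc p₁ 1) with hμ
  set φ : ℝ → ℝ≥0∞ := fun t => ENNReal.ofReal (t ^ ((ε - 1)/2)) with hφ_def
  set ψ : ℝ → ℝ≥0∞ := fun t => ENNReal.ofReal (t ^ (-(ε + 1)/2) * |g t|) with hψ_def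
  have hφm : Measurable φ := by
    apply ENNReal.measurable_ofReal.comp
    exact measurable_id.pow_const _
  have hψm : Measurable ψ := by
    apply ENNReal.measurable_ofReal.comp
    exact (measurable_id.pow_const _).mul hg.abs
  have hae : ∀ᵐ t ∂μ, t ∈ Ioc p₁ 1 := self_mem_ae_restrict measurableSet_Ioc
  have step1 : ∫⁻ t in Ioc p₁ 1, ENNReal.ofReal |g t / t| = ∫⁻ t, φ t * ψ t ∂μ := by
    rw [hμ]
    refine lintegral_congr_ae ?_
    filter_upwards [hae] with t ht
    have ht0 : 0 < t := hp₁.trans ht.1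
    rw [hφ_def, hψ_def, ← ENNReal.ofReal_mul (Real.rpow_nonneg ht0.le _), ← mul_assoc,
      ← Real.rpow_add ht0]
    have : (ε - 1)/2 + -(ε + 1)/2 = -1 := by ring
    rw [this, Real.rpow_neg_one, abs_div, abs_of_pos ht0, div_eq_inv_mul]
  have hφ2 : ∫⁻ t, φ t ^ 2 ∂μ ≤ ENNReal.ofReal ε⁻¹ := by
    have : ∫⁻ t, φ t ^ 2 ∂μ = ∫⁻ t in Ioc p₁ 1, ENNReal.ofReal (t ^ (ε - 1)) := by
      rw [hμ]; refine lintegral_congr_ae ?_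
      filter_upwards [hae] with t ht
      have ht0 : 0 < t := hp₁.trans ht.1
      rw [hφ_def, ← ENNReal.ofReal_pow (Real.rpow_nonneg ht0.le _),
        ← Real.rpow_natCast (t ^ ((ε - 1)/2)) 2, ← Real.rpow_mul ht0.le]
      norm_num
    rw [this, ← pow_lintegral ε hε]
    exact lintegral_mono_set (Ioc_subset_Ioc_left hp₁.le)
  have hψ2 : ∫⁻ t, ψ t ^ 2 ∂μ = ∫⁻ t in Ioc p₁ 1, ENNReal.ofReal (t ^ (-ε) * (g t) ^ 2 / t) := by
    rw [hμ]; refine lintegral_congr_ae ?_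
    filter_upwards [hae] with t ht
    have ht0 : 0 < t := hp₁.trans ht.1
    have key : (t ^ (-(ε + 1)/2)) ^ (2:ℕ) * g t ^ 2 = t ^ (-ε) * g t ^ 2 / t := by
      rw [← Real.rpow_natCast (t ^ (-(ε + 1)/2)) 2, ← Real.rpow_mul ht0.le,
        show -(ε + 1)/2 * ((2:ℕ):ℝ) = -ε + -1 by push_cast; ring,
        Real.rpow_add ht0, Real.rpow_neg_one]
      ring
    rw [hψ_def, ← ENNReal.ofReal_pow (by positivity), mul_pow, sq_abs, key]
  calc (∫⁻ t in Ioc p₁ 1, ENNReal.ofReal |g t / t|) ^ 2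
      = (∫⁻ t, φ t * ψ t ∂μ) ^ 2 := by rw [step1]
    _ ≤ (∫⁻ t, φ t ^ 2 ∂μ) * (∫⁻ t, ψ t ^ 2 ∂μ) :=
        lintegral_sq_cs μ φ ψ hφm.aemeasurable hψm.aemeasurable
    _ ≤ ENNReal.ofReal ε⁻¹ * ∫⁻ t in Ioc p₁ 1, ENNReal.ofReal (t ^ (-ε) * (g t) ^ 2 / t) := by
        rw [← hψ2]; exact mul_le_mul_left hφ2 _

lemma key_bound (b₁ b₂ : ℝ) (hb : b₁ < b₂) (f : ℝ → ℝ → ℝ)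
    (hf : Measurable (Function.uncurry f)) :
    ∫⁻ p in (Ioc (0:ℝ) 1 ×ˢ Ioc (0:ℝ) 1),
        ENNReal.ofReal (p.1 ^ (-(2*b₁)) * p.2 ^ (-(2*b₂)) / (p.1 * p.2)) *
          (∫⁻ t in Ioc p.1 1, ENNReal.ofReal |f (p.1/t) (t*p.2) / t|) ^ 2 ≤
      ENNReal.ofReal (b₂ - b₁)⁻¹ ^ 2 *
        ∫⁻ p in (Ioc (0:ℝ) 1 ×ˢ Ioc (0:ℝ) 1),
          ENNReal.ofReal (p.1 ^ (-(2*b₁)) * p.2 ^ (-(2*b₂)) * f p.1 p.2 ^ 2 / (p.1 * p.2)) := by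
  set ε := b₂ - b₁ with hε_def
  have hε : 0 < ε := sub_pos.2 hb
  set I : Set ℝ := Ioc 0 1 with hI_def
  set S : Set (ℝ × ℝ) := I ×ˢ I with hS_def
  have hSm : MeasurableSet S := measurableSet_Ioc.prod measurableSet_Ioc
  set G : ℝ → ℝ → ℝ := fun x y => x ^ (-(2*b₁)) * y ^ (-(2*b₂)) * f x y ^ 2 with hG_def
  have hG : Measurable (fun q : ℝ × ℝ => G q.1 q.2) := by
    apply Measurable.mul
    · exact (measurable_fst.pow_const _).mul (measurable_snd.pow_const _)
    · exact hf.pow_const 2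
  set B : ℝ → ℝ≥0∞ :=
    fun x => ∫⁻ y in I, ENNReal.ofReal y⁻¹ * ENNReal.ofReal (G x y) with hB_def
  have hB : Measurable B := by
    apply Measurable.lintegral_prod_right (f := fun x y => ENNReal.ofReal y⁻¹ *
      ENNReal.ofReal (G x y))
    exact (ENNReal.measurable_ofReal.comp measurable_snd.inv).mul
      (ENNReal.measurable_ofReal.comp (hG.comp (measurable_fst.prodMk measurable_snd)))
  set C : ℝ≥0∞ := ∫⁻ x in I, ENNReal.ofReal x⁻¹ * B x with hC_def
  set K : ℝ → ℝ → ℝ → ℝ≥0∞ := fun p₁ p₂ t => ENNReal.ofReal (t ^ (ε-1)) *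
    (ENNReal.ofReal p₁⁻¹ * (ENNReal.ofReal p₂⁻¹ * ENNReal.ofReal (G (p₁/t) (t*p₂)))) with hK_def
  -- the triple-integral middle quantity
  set T : ℝ≥0∞ := ∫⁻ p in S, ∫⁻ t in Ioc p.1 1, K p.1 p.2 t with hT_def
  -- Step A : LHS ≤ ofReal ε⁻¹ * T
  have stepA : ∫⁻ p in S,
      ENNReal.ofReal (p.1 ^ (-(2*b₁)) * p.2 ^ (-(2*b₂)) / (p.1 * p.2)) *
        (∫⁻ t in Ioc p.1 1, ENNReal.ofReal |f (p.1/t) (t*p.2) / t|) ^ 2 ≤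
      ENNReal.ofReal ε⁻¹ * T := by
    rw [hT_def, ← lintegral_const_mul' _ _ ENNReal.ofReal_ne_top]
    refine lintegral_mono_ae ?_
    filter_upwards [self_mem_ae_restrict hSm] with p hp
    obtain ⟨hp1, hp2⟩ := hp
    have hp10 : 0 < p.1 := hp1.1
    have hp20 : 0 < p.2 := hp2.1
    have hgm : Measurable (fun t => f (p.1/t) (t*p.2)) :=
      hf.comp ((measurable_const.div measurable_id).prodMk (measurable_id.mul_const p.2))
    have cs := cs_step ε hε p.1 hp10 (fun t => f (p.1/t) (t*p.2)) hgm
    calc ENNReal.ofReal (p.1 ^ (-(2*b₁)) * p.2 ^ (-(2*b₂)) / (p.1 * p.2)) *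
          (∫⁻ t in Ioc p.1 1, ENNReal.ofReal |f (p.1/t) (t*p.2) / t|) ^ 2
        ≤ ENNReal.ofReal (p.1 ^ (-(2*b₁)) * p.2 ^ (-(2*b₂)) / (p.1 * p.2)) *
          (ENNReal.ofReal ε⁻¹ *
            ∫⁻ t in Ioc p.1 1, ENNReal.ofReal (t ^ (-ε) * (f (p.1/t) (t*p.2)) ^ 2 / t)) :=
          mul_le_mul_right cs _
      _ = ENNReal.ofReal ε⁻¹ *
          (ENNReal.ofReal (p.1 ^ (-(2*b₁)) * p.2 ^ (-(2*b₂)) / (p.1 * p.2)) *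
            ∫⁻ t in Ioc p.1 1, ENNReal.ofReal (t ^ (-ε) * (f (p.1/t) (t*p.2)) ^ 2 / t)) := by
          ring
      _ = ENNReal.ofReal ε⁻¹ * ∫⁻ t in Ioc p.1 1, K p.1 p.2 t := by
          congr 1
          rw [← lintegral_const_mul' _ _ ENNReal.ofReal_ne_top]
          refine lintegral_congr_ae ?_
          filter_upwards [self_mem_ae_restrict measurableSet_Ioc] with t ht
          have ht0 : 0 < t := hp10.trans ht.1
          have hG0 : 0 ≤ G (p.1/t) (t*p.2) := by
            simp only [hG_def]
            have h1 := Real.rpow_nonneg (div_nonneg hp10.le ht0.le) (-(2*b₁))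
            have h2 := Real.rpow_nonneg (mul_nonneg ht0.le hp20.le) (-(2*b₂))
            positivity
          have hw0 : 0 ≤ p.1 ^ (-(2*b₁)) * p.2 ^ (-(2*b₂)) / (p.1 * p.2) :=
            div_nonneg (mul_nonneg (Real.rpow_nonneg hp10.le _)
              (Real.rpow_nonneg hp20.le _)) (by positivity)
          have hreal : (p.1 ^ (-(2*b₁)) * p.2 ^ (-(2*b₂)) / (p.1 * p.2)) *
              (t ^ (-ε) * (f (p.1/t) (t*p.2)) ^ 2 / t) =
              t ^ (ε-1) * (p.1⁻¹ * (p.2⁻¹ * G (p.1/t) (t*p.2))) := by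
            simp only [hG_def]
            have e1 : (p.1/t) ^ (-(2*b₁)) = p.1 ^ (-(2*b₁)) * t ^ (2*b₁) := by
              rw [Real.div_rpow hp10.le ht0.le _, div_eq_mul_inv, ← Real.rpow_neg ht0.le,
                neg_neg]
            have e2 : (t*p.2) ^ (-(2*b₂)) = t ^ (-(2*b₂)) * p.2 ^ (-(2*b₂)) :=
              Real.mul_rpow ht0.le hp20.le
            have e3 : t ^ (ε-1) * t ^ (2*b₁) * t ^ (-(2*b₂)) = t ^ (-ε) * t⁻¹ := by
              rw [← Real.rpow_add ht0, ← Real.rpow_add ht0, ← Real.rpow_neg_one t,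
                ← Real.rpow_add ht0]
              congr 1
              rw [hε_def]; ring
            calc p.1 ^ (-(2*b₁)) * p.2 ^ (-(2*b₂)) / (p.1 * p.2) *
                  (t ^ (-ε) * f (p.1/t) (t*p.2) ^ 2 / t)
                = p.1 ^ (-(2*b₁)) * p.2 ^ (-(2*b₂)) * f (p.1/t) (t*p.2) ^ 2 *
                  (t ^ (-ε) * t⁻¹) * p.1⁻¹ * p.2⁻¹ := by
                  rw [div_eq_mul_inv, div_eq_mul_inv, mul_inv]; ring
              _ = p.1 ^ (-(2*b₁)) * p.2 ^ (-(2*b₂)) * f (p.1/t) (t*p.2) ^ 2 *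
                  (t ^ (ε-1) * t ^ (2*b₁) * t ^ (-(2*b₂))) * p.1⁻¹ * p.2⁻¹ := by
                  rw [e3]
              _ = t ^ (ε-1) * (p.1⁻¹ * (p.2⁻¹ *
                  ((p.1/t) ^ (-(2*b₁)) * (t*p.2) ^ (-(2*b₂)) * f (p.1/t) (t*p.2) ^ 2))) := by
                  rw [e1, e2]; ring
          simp only [hK_def]
          rw [← ENNReal.ofReal_mul hw0, hreal,
            ENNReal.ofReal_mul (Real.rpow_nonneg ht0.le _),
            ENNReal.ofReal_mul (inv_nonneg.2 hp10.le),
            ENNReal.ofReal_mul (inv_nonneg.2 hp20.le)]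
  -- joint measurability of the kernel
  have hKm : Measurable (fun q : (ℝ × ℝ) × ℝ => K q.1.1 q.1.2 q.2) := by
    simp only [hK_def]
    refine Measurable.mul (f := fun q : (ℝ × ℝ) × ℝ => ENNReal.ofReal (q.2 ^ (ε-1))) ?_
      (Measurable.mul (f := fun q : (ℝ × ℝ) × ℝ => ENNReal.ofReal q.1.1⁻¹) ?_
        (Measurable.mul (f := fun q : (ℝ × ℝ) × ℝ => ENNReal.ofReal q.1.2⁻¹) ?_ ?_))
    · exact ENNReal.measurable_ofReal.comp (measurable_snd.pow_const _)
    · exact ENNReal.measurable_ofReal.comp measurable_fst.fst.inv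
    · exact ENNReal.measurable_ofReal.comp measurable_fst.snd.inv
    · exact ENNReal.measurable_ofReal.comp (hG.comp
        ((measurable_fst.fst.div measurable_snd).prodMk
          (measurable_snd.mul measurable_fst.snd)))
  set Θ : (ℝ × ℝ) × ℝ → ℝ≥0∞ := fun q => if q.1.1 < q.2 then K q.1.1 q.1.2 q.2 else 0
    with hΘ_def
  have hΘ : Measurable Θ := Measurable.ite
    (measurableSet_lt measurable_fst.fst measurable_snd) hKm measurable_const
  set Λ' : ℝ × ℝ → ℝ≥0∞ := fun p => ∫⁻ t in I, Θ (p, t) with hΛ'_def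
  have hΛ' : Measurable Λ' := Measurable.lintegral_prod_right' hΘ
  have hprod : (volume : Measure (ℝ × ℝ)).restrict S =
      (volume.restrict I).prod (volume.restrict I) := by
    rw [Measure.prod_restrict, ← Measure.volume_eq_prod]
  have hIoiI : ∀ x : ℝ, 0 < x → Ioi x ∩ I = Ioc x 1 := by
    intro x hx
    ext t
    simp only [hI_def, mem_inter_iff, mem_Ioi, mem_Ioc]
    constructor
    · rintro ⟨h1, _, h3⟩; exact ⟨h1, h3⟩
    · rintro ⟨h1, h2⟩; exact ⟨h1, hx.trans h1, h2⟩
  have hTeq : T = ∫⁻ p in S, Λ' p := by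
    rw [hT_def]
    refine setLIntegral_congr_fun_ae hSm (ae_of_all _ ?_)
    rintro p ⟨hp1, hp2⟩
    have h1 : ∀ t : ℝ, Θ (p, t) = (Ioi p.1).indicator (fun t => K p.1 p.2 t) t := by
      intro t; simp only [hΘ_def, indicator_apply, mem_Ioi]
    simp only [hΛ'_def, h1]
    rw [lintegral_indicator measurableSet_Ioi, Measure.restrict_restrict measurableSet_Ioi,
      hIoiI p.1 hp1.1]
  -- the middle bound with B
  set Ξ : ℝ → ℝ → ℝ≥0∞ := fun x t =>
    if x < t then ENNReal.ofReal (t ^ (ε-1)) * (ENNReal.ofReal x⁻¹ * B (x/t)) else 0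
    with hΞ_def
  have hΞ : Measurable (fun q : ℝ × ℝ => Ξ q.1 q.2) := by
    simp only [hΞ_def]
    refine Measurable.ite (measurableSet_lt measurable_fst measurable_snd) ?_ measurable_const
    exact (ENNReal.measurable_ofReal.comp (measurable_snd.pow_const _)).mul
      ((ENNReal.measurable_ofReal.comp measurable_fst.inv).mul
        (hB.comp (measurable_fst.div measurable_snd)))
  have bound1 : ∀ x ∈ I, ∫⁻ y in I, Λ' (x, y) ≤ ∫⁻ t in I, Ξ x t := by
    intro x hx
    have hx0 : 0 < x := hx.1
    have hswap : ∫⁻ y in I, ∫⁻ t in I, Θ ((x, y), t) = ∫⁻ t in I, ∫⁻ y in I, Θ ((x, y), t) :=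
      lintegral_lintegral_swap ((hΘ.comp
        (((measurable_const.prodMk measurable_fst)).prodMk measurable_snd)).aemeasurable)
    simp only [hΛ'_def]
    rw [hswap]
    refine lintegral_mono_ae ?_
    filter_upwards [self_mem_ae_restrict measurableSet_Ioc] with t ht
    have ht0 : 0 < t := ht.1
    by_cases hxt : x < t
    · have hth : ∀ y : ℝ, Θ ((x, y), t) =
          (ENNReal.ofReal (t ^ (ε-1)) * ENNReal.ofReal x⁻¹) *
            (ENNReal.ofReal y⁻¹ * ENNReal.ofReal (G (x/t) (t*y))) := by
        intro y
        simp only [hΘ_def, if_pos hxt, hK_def]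
        ring
      simp only [hth, hΞ_def, if_pos hxt]
      rw [lintegral_const_mul' _ _ (by finiteness)]
      have hscale : ∫⁻ y in Ioc (0:ℝ) 1, ENNReal.ofReal y⁻¹ * ENNReal.ofReal (G (x/t) (t*y)) =
          ∫⁻ y in Ioc (0:ℝ) (t*1), ENNReal.ofReal y⁻¹ * ENNReal.ofReal (G (x/t) y) :=
        haar_scale t ht0 (fun y => ENNReal.ofReal (G (x/t) y))
          (ENNReal.measurable_ofReal.comp (hG.comp (measurable_const.prodMk measurable_id)))
          1
      have hle : ∫⁻ y in I, ENNReal.ofReal y⁻¹ * ENNReal.ofReal (G (x/t) (t*y)) ≤ B (x/t) := by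
        rw [hI_def, hscale, mul_one, hB_def]
        exact lintegral_mono_set (Ioc_subset_Ioc le_rfl ht.2)
      calc ENNReal.ofReal (t ^ (ε-1)) * ENNReal.ofReal x⁻¹ *
            ∫⁻ y in I, ENNReal.ofReal y⁻¹ * ENNReal.ofReal (G (x/t) (t*y))
          ≤ ENNReal.ofReal (t ^ (ε-1)) * ENNReal.ofReal x⁻¹ * B (x/t) :=
            mul_le_mul_right hle _
        _ = ENNReal.ofReal (t ^ (ε-1)) * (ENNReal.ofReal x⁻¹ * B (x/t)) := by ring
    · have hth : ∀ y : ℝ, Θ ((x, y), t) = 0 := by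
        intro y; simp only [hΘ_def, if_neg hxt]
      simp only [hth, hΞ_def, if_neg hxt, lintegral_zero, le_refl]
  -- compute the Ξ integral
  have hΞint : ∀ t ∈ I, ∫⁻ x in I, Ξ x t = ENNReal.ofReal (t ^ (ε-1)) * C := by
    intro t ht
    have ht0 : 0 < t := ht.1
    have h1 : ∀ x : ℝ, Ξ x t = (Iio t).indicator
        (fun x => ENNReal.ofReal (t ^ (ε-1)) * (ENNReal.ofReal x⁻¹ * B (x/t))) x := by
      intro x; simp only [hΞ_def, indicator_apply, mem_Iio]
    simp only [h1]
    rw [lintegral_indicator measurableSet_Iio, Measure.restrict_restrict measurableSet_Iio]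
    have h2 : Iio t ∩ I = Ioo 0 t := by
      ext x
      simp only [hI_def, mem_inter_iff, mem_Iio, mem_Ioc, mem_Ioo]
      constructor
      · rintro ⟨h1', h2', _⟩; exact ⟨h2', h1'⟩
      · rintro ⟨h1', h2'⟩; exact ⟨h2', h1', h2'.le.trans ht.2⟩
    rw [h2, setLIntegral_congr Ioo_ae_eq_Ioc,
      lintegral_const_mul' _ _ ENNReal.ofReal_ne_top]
    congr 1
    have h3 : ∀ x : ℝ, ENNReal.ofReal x⁻¹ * B (x/t) = ENNReal.ofReal x⁻¹ * B (t⁻¹ * x) := by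
      intro x; rw [div_eq_inv_mul]
    simp only [h3]
    rw [haar_scale t⁻¹ (inv_pos.2 ht0) B hB t, inv_mul_cancel₀ ht0.ne', hC_def, hI_def]
  -- step B : T ≤ ofReal ε⁻¹ * C
  have stepB : T ≤ ENNReal.ofReal ε⁻¹ * C := by
    have hswap2 : ∫⁻ x in I, ∫⁻ t in I, Ξ x t = ∫⁻ t in I, ∫⁻ x in I, Ξ x t :=
      lintegral_lintegral_swap hΞ.aemeasurable
    calc T = ∫⁻ p in S, Λ' p := hTeq
      _ = ∫⁻ x in I, ∫⁻ y in I, Λ' (x, y) := by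
          rw [hprod, lintegral_prod _ hΛ'.aemeasurable]
      _ ≤ ∫⁻ x in I, ∫⁻ t in I, Ξ x t := by
          refine lintegral_mono_ae ?_
          filter_upwards [self_mem_ae_restrict measurableSet_Ioc] with x hx
          exact bound1 x hx
      _ = ∫⁻ t in I, ∫⁻ x in I, Ξ x t := hswap2
      _ = ∫⁻ t in I, ENNReal.ofReal (t ^ (ε-1)) * C := by
          refine setLIntegral_congr_fun_ae measurableSet_Ioc (ae_of_all _ ?_)
          exact hΞint
      _ = (∫⁻ t in I, ENNReal.ofReal (t ^ (ε-1))) * C := by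
          rw [lintegral_mul_const _ (Measurable.ennreal_ofReal (measurable_id'.pow_const _))]
      _ = ENNReal.ofReal ε⁻¹ * C := by rw [hI_def, pow_lintegral ε hε]
  -- step C : C equals the weighted norm of f
  have stepC : C = ∫⁻ p in S,
      ENNReal.ofReal (p.1 ^ (-(2*b₁)) * p.2 ^ (-(2*b₂)) * f p.1 p.2 ^ 2 / (p.1 * p.2)) := by
    have hFm : Measurable (fun p : ℝ × ℝ =>
        ENNReal.ofReal (p.1 ^ (-(2*b₁)) * p.2 ^ (-(2*b₂)) * f p.1 p.2 ^ 2 / (p.1 * p.2))) := by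
      apply Measurable.ennreal_ofReal
      exact (((measurable_fst.pow_const _).mul (measurable_snd.pow_const _)).mul
        (hf.pow_const 2)).div (measurable_fst.mul measurable_snd)
    rw [hprod, lintegral_prod _ hFm.aemeasurable]
    rw [hC_def]
    refine setLIntegral_congr_fun_ae measurableSet_Ioc (ae_of_all _ ?_)
    intro x hx
    have hx0 : 0 < x := hx.1
    have hinner : ∀ y ∈ I, ENNReal.ofReal x⁻¹ * (ENNReal.ofReal y⁻¹ *
        ENNReal.ofReal (G x y)) =
        ENNReal.ofReal (x ^ (-(2*b₁)) * y ^ (-(2*b₂)) * f x y ^ 2 / (x * y)) := by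
      intro y hy
      have hy0 : 0 < y := hy.1
      have hreal2 : x ^ (-(2*b₁)) * y ^ (-(2*b₂)) * f x y ^ 2 / (x * y) =
          x⁻¹ * (y⁻¹ * G x y) := by
        simp only [hG_def]
        rw [div_eq_mul_inv, mul_inv]
        ring
      rw [hreal2, ENNReal.ofReal_mul (inv_nonneg.2 hx0.le),
        ENNReal.ofReal_mul (inv_nonneg.2 hy0.le)]
    calc ENNReal.ofReal x⁻¹ * B x
        = ∫⁻ y in I, ENNReal.ofReal x⁻¹ * (ENNReal.ofReal y⁻¹ * ENNReal.ofReal (G x y)) := by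
          rw [hB_def, lintegral_const_mul' _ _ ENNReal.ofReal_ne_top]
      _ = ∫⁻ y in I, ENNReal.ofReal (x ^ (-(2*b₁)) * y ^ (-(2*b₂)) * f x y ^ 2 / (x * y)) := by
          refine setLIntegral_congr_fun_ae measurableSet_Ioc (ae_of_all _ ?_)
          exact hinner
  -- assemble
  calc ∫⁻ p in S, ENNReal.ofReal (p.1 ^ (-(2*b₁)) * p.2 ^ (-(2*b₂)) / (p.1 * p.2)) *
        (∫⁻ t in Ioc p.1 1, ENNReal.ofReal |f (p.1/t) (t*p.2) / t|) ^ 2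
      ≤ ENNReal.ofReal ε⁻¹ * T := stepA
    _ ≤ ENNReal.ofReal ε⁻¹ * (ENNReal.ofReal ε⁻¹ * C) := mul_le_mul_right stepB _
    _ = ENNReal.ofReal ε⁻¹ ^ 2 * C := by rw [pow_two, mul_assoc]
    _ = ENNReal.ofReal ε⁻¹ ^ 2 * ∫⁻ p in S,
          ENNReal.ofReal (p.1 ^ (-(2*b₁)) * p.2 ^ (-(2*b₂)) * f p.1 p.2 ^ 2 / (p.1 * p.2)) := by
        rw [stepC]

/-- Transport of weights from spacelike infinity to null infinity: for `b₁ < b₂` and `f` with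
finite weighted norm `J` on `(0,1]²`, the solution
`u(ρ₁,ρ₂) = ∫_{ρ₁}¹ f(ρ₁/t, tρ₂) dt/t` of `(ρ₁∂_{ρ₁} - ρ₂∂_{ρ₂}) u = -f` supported in `ρ₁ ≤ 1`
is defined by an a.e. absolutely convergent integral and satisfies
`∫∫ ρ₁^{-2b₁} ρ₂^{-2b₂} |u|² (dρ₁/ρ₁)(dρ₂/ρ₂) ≤ (b₂-b₁)⁻² J`. -/
theorem transport_weight_estimate (b₁ b₂ : ℝ) (hb : b₁ < b₂)
    (f : ℝ → ℝ → ℝ) (hf : Measurable (Function.uncurry f))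
    (hJ : IntegrableOn
      (fun p : ℝ × ℝ =>
        p.1 ^ (-(2 * b₁)) * p.2 ^ (-(2 * b₂)) * (f p.1 p.2) ^ 2 / (p.1 * p.2))
      (Ioc 0 1 ×ˢ Ioc 0 1)) :
    (∀ᵐ p ∂(volume.restrict (Ioc (0 : ℝ) 1 ×ˢ Ioc (0 : ℝ) 1)),
      IntegrableOn (fun t => f (p.1 / t) (t * p.2) / t) (Ioc p.1 1)) ∧
    IntegrableOn
      (fun p : ℝ × ℝ =>
        p.1 ^ (-(2 * b₁)) * p.2 ^ (-(2 * b₂)) *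
          (∫ t in Ioc p.1 1, f (p.1 / t) (t * p.2) / t) ^ 2 / (p.1 * p.2))
      (Ioc 0 1 ×ˢ Ioc 0 1) ∧
    (∫ p in (Ioc (0 : ℝ) 1 ×ˢ Ioc (0 : ℝ) 1),
        p.1 ^ (-(2 * b₁)) * p.2 ^ (-(2 * b₂)) *
          (∫ t in Ioc p.1 1, f (p.1 / t) (t * p.2) / t) ^ 2 / (p.1 * p.2)) ≤
      ((b₂ - b₁)⁻¹) ^ 2 *
        (∫ p in (Ioc (0 : ℝ) 1 ×ˢ Ioc (0 : ℝ) 1),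
          p.1 ^ (-(2 * b₁)) * p.2 ^ (-(2 * b₂)) * (f p.1 p.2) ^ 2 / (p.1 * p.2)) := by
  have hε : (0:ℝ) < b₂ - b₁ := sub_pos.2 hb
  set S : Set (ℝ × ℝ) := Ioc 0 1 ×ˢ Ioc 0 1 with hS_def
  have hSm : MeasurableSet S := measurableSet_Ioc.prod measurableSet_Ioc
  set F : ℝ × ℝ → ℝ := fun p =>
    p.1 ^ (-(2 * b₁)) * p.2 ^ (-(2 * b₂)) * (f p.1 p.2) ^ 2 / (p.1 * p.2) with hF_def
  set U : ℝ × ℝ → ℝ := fun p =>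
    p.1 ^ (-(2 * b₁)) * p.2 ^ (-(2 * b₂)) *
      (∫ t in Ioc p.1 1, f (p.1 / t) (t * p.2) / t) ^ 2 / (p.1 * p.2) with hU_def
  set u : ℝ × ℝ → ℝ := fun p => ∫ t in Ioc p.1 1, f (p.1 / t) (t * p.2) / t with hu_def
  set w : ℝ × ℝ → ℝ≥0∞ := fun p =>
    ENNReal.ofReal (p.1 ^ (-(2 * b₁)) * p.2 ^ (-(2 * b₂)) / (p.1 * p.2)) with hw_def
  set Inner : ℝ × ℝ → ℝ≥0∞ := fun p =>
    ∫⁻ t in Ioc p.1 1, ENNReal.ofReal |f (p.1 / t) (t * p.2) / t| with hInner_def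
  have KEY := key_bound b₁ b₂ hb f hf
  -- basic measurability
  have hmapm : Measurable (fun q : (ℝ × ℝ) × ℝ => f (q.1.1 / q.2) (q.2 * q.1.2) / q.2) :=
    (hf.comp ((measurable_fst.fst.div measurable_snd).prodMk
      (measurable_snd.mul measurable_fst.snd))).div measurable_snd
  have hΦ : Measurable (fun q : (ℝ × ℝ) × ℝ =>
      if q.1.1 < q.2 ∧ q.2 ≤ 1 then ENNReal.ofReal |f (q.1.1 / q.2) (q.2 * q.1.2) / q.2|
      else 0) := by
    refine Measurable.ite ?_ hmapm.abs.ennreal_ofReal measurable_const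
    exact (measurableSet_lt measurable_fst.fst measurable_snd).inter
      (measurableSet_le measurable_snd measurable_const)
  have hInner_eq : ∀ p : ℝ × ℝ, Inner p = ∫⁻ t,
      (if p.1 < t ∧ t ≤ 1 then ENNReal.ofReal |f (p.1 / t) (t * p.2) / t| else 0) := by
    intro p
    simp only [hInner_def]
    rw [← lintegral_indicator measurableSet_Ioc]
    exact lintegral_congr fun t => by simp [indicator_apply, mem_Ioc]
  have hInner : Measurable Inner := by
    have h := Measurable.lintegral_prod_right' (ν := volume) hΦ
    convert h using 1
    exact funext hInner_eq
  have hwm : Measurable w := by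
    apply Measurable.ennreal_ofReal
    exact ((measurable_fst.pow_const _).mul (measurable_snd.pow_const _)).div
      (measurable_fst.mul measurable_snd)
  -- measurability of u
  have hΨ : StronglyMeasurable (fun q : (ℝ × ℝ) × ℝ =>
      if q.2 ∈ Ioc q.1.1 1 then f (q.1.1 / q.2) (q.2 * q.1.2) / q.2 else 0) := by
    apply Measurable.stronglyMeasurable
    refine Measurable.ite ?_ hmapm measurable_const
    have : {q : (ℝ × ℝ) × ℝ | q.2 ∈ Ioc q.1.1 1} =
        {q : (ℝ × ℝ) × ℝ | q.1.1 < q.2} ∩ {q | q.2 ≤ 1} := by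
      ext q; simp [mem_Ioc]
    rw [this]
    exact (measurableSet_lt measurable_fst.fst measurable_snd).inter
      (measurableSet_le measurable_snd measurable_const)
  have hu_eq : ∀ p : ℝ × ℝ, u p = ∫ t,
      (if t ∈ Ioc p.1 1 then f (p.1 / t) (t * p.2) / t else 0) := by
    intro p
    simp only [hu_def]
    rw [← integral_indicator measurableSet_Ioc]
    exact integral_congr_ae (ae_of_all _ fun t => by simp [indicator_apply])
  have hum : StronglyMeasurable u := by
    have h := hΨ.integral_prod_right' (ν := volume)
    convert h using 1
    exact funext hu_eq
  have hUm : Measurable U := by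
    apply Measurable.div
    · exact ((measurable_fst.pow_const _).mul (measurable_snd.pow_const _)).mul
        (hum.measurable.pow_const 2)
    · exact measurable_fst.mul measurable_snd
  -- finiteness from the key bound
  have hJ'fin : (∫⁻ p in S, ENNReal.ofReal (F p)) < ⊤ :=
    lt_of_le_of_lt (lintegral_mono fun p => Real.ofReal_le_enorm _) hJ.2
  have hRHSfin : ENNReal.ofReal (b₂ - b₁)⁻¹ ^ 2 * (∫⁻ p in S, ENNReal.ofReal (F p)) < ⊤ :=
    ENNReal.mul_lt_top (ENNReal.pow_ne_top ENNReal.ofReal_ne_top).lt_top hJ'fin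
  have hLfin : (∫⁻ p in S, w p * Inner p ^ 2) < ⊤ := lt_of_le_of_lt KEY hRHSfin
  -- pointwise nonnegativity/positivity facts on S
  have hwpos : ∀ p ∈ S, 0 < p.1 ^ (-(2 * b₁)) * p.2 ^ (-(2 * b₂)) / (p.1 * p.2) := by
    rintro p ⟨hp1, hp2⟩
    have h1 := Real.rpow_pos_of_pos hp1.1 (-(2 * b₁))
    have h2 := Real.rpow_pos_of_pos hp2.1 (-(2 * b₂))
    have h3 : 0 < p.1 * p.2 := mul_pos hp1.1 hp2.1
    positivity
  -- Part 1 : a.e. integrability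
  have part1 : ∀ᵐ p ∂(volume.restrict S),
      IntegrableOn (fun t => f (p.1 / t) (t * p.2) / t) (Ioc p.1 1) := by
    have h1 : ∀ᵐ p ∂(volume.restrict S), w p * Inner p ^ 2 < ⊤ :=
      ae_lt_top (hwm.mul (hInner.pow_const 2)) hLfin.ne
    filter_upwards [h1, self_mem_ae_restrict hSm] with p hfin hp
    have hw0 : w p ≠ 0 := by
      simp only [hw_def, ne_eq, ENNReal.ofReal_eq_zero, not_le]
      exact hwpos p hp
    have hIfin : Inner p ≠ ⊤ := by
      intro htop
      rw [htop] at hfin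
      simp [ENNReal.top_pow, ENNReal.mul_top, hw0] at hfin
    constructor
    · exact ((hf.comp ((measurable_const.div measurable_id).prodMk
        (measurable_id.mul_const p.2))).div measurable_id).aestronglyMeasurable
    · show (∫⁻ t in Ioc p.1 1, ‖f (p.1 / t) (t * p.2) / t‖ₑ) < ⊤
      simp_rw [Real.enorm_eq_ofReal_abs]
      exact lt_of_le_of_lt le_rfl (lt_of_le_of_ne le_top hIfin)
  -- pointwise bound for the solution integrand
  have hptw : ∀ p ∈ S, ENNReal.ofReal (U p) ≤ w p * Inner p ^ 2 := by
    intro p hp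
    obtain ⟨hp1, hp2⟩ := hp
    have hw0 : 0 ≤ p.1 ^ (-(2 * b₁)) * p.2 ^ (-(2 * b₂)) / (p.1 * p.2) :=
      (hwpos p ⟨hp1, hp2⟩).le
    have hU_eq : U p = (p.1 ^ (-(2 * b₁)) * p.2 ^ (-(2 * b₂)) / (p.1 * p.2)) * u p ^ 2 := by
      rw [hU_def, hu_def]; ring
    have habs : ENNReal.ofReal (u p ^ 2) = ENNReal.ofReal |u p| ^ 2 := by
      rw [← ENNReal.ofReal_pow (abs_nonneg _), sq_abs]
    have hle : ENNReal.ofReal |u p| ≤ Inner p := by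
      rw [← Real.enorm_eq_ofReal_abs, hu_def, hInner_def]
      refine le_trans (enorm_integral_le_lintegral_enorm _) ?_
      simp_rw [Real.enorm_eq_ofReal_abs]
      exact le_rfl
    calc ENNReal.ofReal (U p)
        = w p * ENNReal.ofReal (u p ^ 2) := by
          rw [hU_eq, hw_def, ENNReal.ofReal_mul hw0]
      _ = w p * ENNReal.ofReal |u p| ^ 2 := by rw [habs]
      _ ≤ w p * Inner p ^ 2 := mul_le_mul_right (pow_le_pow_left₀ zero_le hle 2) _
  have hptw_ae : ∀ᵐ p ∂(volume.restrict S), ENNReal.ofReal (U p) ≤ w p * Inner p ^ 2 := by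
    filter_upwards [self_mem_ae_restrict hSm] with p hp
    exact hptw p hp
  have hUnn : 0 ≤ᵐ[volume.restrict S] U := by
    filter_upwards [self_mem_ae_restrict hSm] with p hp
    simp only [hU_def]
    exact div_nonneg (mul_nonneg (mul_nonneg (Real.rpow_nonneg hp.1.1.le _)
      (Real.rpow_nonneg hp.2.1.le _)) (sq_nonneg _)) (mul_pos hp.1.1 hp.2.1).le
  have hbound : ∀ᵐ p ∂(volume.restrict S), ‖U p‖ₑ ≤ w p * Inner p ^ 2 := by
    filter_upwards [hptw_ae, hUnn] with p h1 h2
    rwa [Real.enorm_eq_ofReal_abs, abs_of_nonneg h2]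
  have part2 : IntegrableOn U S := by
    constructor
    · exact hUm.aestronglyMeasurable
    · show (∫⁻ p in S, ‖U p‖ₑ) < ⊤
      exact lt_of_le_of_lt (lintegral_mono_ae hbound) hLfin
  refine ⟨part1, part2, ?_⟩
  have hFnn : 0 ≤ᵐ[volume.restrict S] F := by
    filter_upwards [self_mem_ae_restrict hSm] with p hp
    simp only [hF_def]
    exact div_nonneg (mul_nonneg (mul_nonneg (Real.rpow_nonneg hp.1.1.le _)
      (Real.rpow_nonneg hp.2.1.le _)) (sq_nonneg _)) (mul_pos hp.1.1 hp.2.1).le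
  have hJeq : ENNReal.ofReal (∫ p in S, F p) = ∫⁻ p in S, ENNReal.ofReal (F p) :=
    ofReal_integral_eq_lintegral_ofReal hJ hFnn
  have hInt_eq : ∫ p in S, U p = (∫⁻ p in S, ENNReal.ofReal (U p)).toReal :=
    integral_eq_lintegral_of_nonneg_ae hUnn hUm.aestronglyMeasurable
  have hFint_nonneg : 0 ≤ ∫ p in S, F p := integral_nonneg_of_ae hFnn
  have hchain : (∫⁻ p in S, ENNReal.ofReal (U p)) ≤
      ENNReal.ofReal (b₂ - b₁)⁻¹ ^ 2 * ∫⁻ p in S, ENNReal.ofReal (F p) :=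
    le_trans (lintegral_mono_ae hptw_ae) KEY
  calc ∫ p in S, U p = (∫⁻ p in S, ENNReal.ofReal (U p)).toReal := hInt_eq
    _ ≤ (ENNReal.ofReal (b₂ - b₁)⁻¹ ^ 2 * ∫⁻ p in S, ENNReal.ofReal (F p)).toReal :=
        ENNReal.toReal_mono hRHSfin.ne hchain
    _ = ((b₂ - b₁)⁻¹) ^ 2 * ∫ p in S, F p := by
        rw [← hJeq, ENNReal.toReal_mul, ENNReal.toReal_pow,
          ENNReal.toReal_ofReal (inv_nonneg.2 hε.le), ENNReal.toReal_ofReal hFint_nonneg]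
end

section
/- For R ∈ (0,1), set L(R) = log((1−R)/(1+R)) and define u₀(R) = R^{−1}·L(R), u₁(R) = R^{−2}·L(R) + 2R^{−1}, and u₂(R) = ((3−R²)/(2R³))·L(R) + 3R^{−2}. Then u₀, u₁, u₂ are smooth on (0,1), and for each ℓ ∈ {0,1,2} and every R ∈ (0,1) one has the identity d/dR [ R²(1−R²)·u_ℓ'(R) ] = (ℓ(ℓ+1) + 2R²)·u_ℓ(R). -/
noncomputable def u0 (R : ℝ) : ℝ := Real.log ((1 - R) / (1 + R)) / R

noncomputable def u1 (R : ℝ) : ℝ := Real.log ((1 - R) / (1 + R)) / R ^ 2 + 2 / R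

noncomputable def u2 (R : ℝ) : ℝ :=
  (3 - R ^ 2) / (2 * R ^ 3) * Real.log ((1 - R) / (1 + R)) + 3 / R ^ 2

noncomputable def lg (r : ℝ) : ℝ := Real.log ((1 - r) / (1 + r))

noncomputable def phi0 (r : ℝ) : ℝ := -2 * r - (1 - r ^ 2) * lg r

noncomputable def phi1 (r : ℝ) : ℝ := 2 * r ^ 2 - 4 - 2 * (1 - r ^ 2) * lg r / r

noncomputable def phi2 (r : ℝ) : ℝ :=
  (1 - r ^ 2) * (r ^ 2 - 9) * lg r / (2 * r ^ 2) + (7 * r ^ 2 - 9) / r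

lemma hasDerivAt_id'' (R : ℝ) : HasDerivAt (fun y : ℝ => y) 1 R := hasDerivAt_id R

lemma hasDerivAt_lg {R : ℝ} (h0 : 0 < R) (h1 : R < 1) :
    HasDerivAt lg (-2 / (1 - R ^ 2)) R := by
  have h1R : (0:ℝ) < 1 - R := by linarith
  have h2R : (0:ℝ) < 1 + R := by linarith
  have hnum : HasDerivAt (fun r : ℝ => 1 - r) (-1) R := by
    simpa using (hasDerivAt_id'' R).const_sub 1
  have hden : HasDerivAt (fun r : ℝ => 1 + r) 1 R := by
    simpa using (hasDerivAt_id'' R).const_add 1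
  have hf : HasDerivAt (fun r : ℝ => (1 - r) / (1 + r))
      ((-1 * (1 + R) - (1 - R) * 1) / (1 + R) ^ 2) R := hnum.div hden h2R.ne'
  have hne : (1 - R) / (1 + R) ≠ 0 := div_ne_zero h1R.ne' h2R.ne'
  have := hf.log hne
  have heq : (-1 * (1 + R) - (1 - R) * 1) / (1 + R) ^ 2 / ((1 - R) / (1 + R)) =
      -2 / (1 - R ^ 2) := by
    have e1 : (1:ℝ) - R ≠ 0 := h1R.ne'
    have e2 : (1:ℝ) + R ≠ 0 := h2R.ne'
    have e3 : (1:ℝ) - R ^ 2 ≠ 0 := by nlinarith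
    field_simp
    ring
  rw [heq] at this
  exact this

lemma hasDerivAt_u0 {R : ℝ} (h0 : 0 < R) (h1 : R < 1) :
    HasDerivAt u0 (-2 / (R * (1 - R ^ 2)) - lg R / R ^ 2) R := by
  have := (hasDerivAt_lg h0 h1).div (hasDerivAt_id'' R) h0.ne'
  have heq : (-2 / (1 - R ^ 2) * R - lg R * 1) / R ^ 2 =
      -2 / (R * (1 - R ^ 2)) - lg R / R ^ 2 := by
    have e1 : R ≠ 0 := h0.ne'
    have e3 : (1:ℝ) - R ^ 2 ≠ 0 := by nlinarith
    field_simp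
  rw [heq] at this
  exact this

lemma hasDerivAt_u1 {R : ℝ} (h0 : 0 < R) (h1 : R < 1) :
    HasDerivAt u1 (-2 / (R ^ 2 * (1 - R ^ 2)) - 2 * lg R / R ^ 3 - 2 / R ^ 2) R := by
  have e1 : R ≠ 0 := h0.ne'
  have e3 : (1:ℝ) - R ^ 2 ≠ 0 := by nlinarith
  have hp : HasDerivAt (fun r : ℝ => r ^ 2) (2 * R) R := by
    simpa using hasDerivAt_pow 2 R
  have ha := (hasDerivAt_lg h0 h1).div hp (pow_ne_zero 2 e1)
  have hb := (hasDerivAt_const R (2:ℝ)).div (hasDerivAt_id'' R) e1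
  have := ha.add hb
  have heq : (-2 / (1 - R ^ 2) * R ^ 2 - lg R * (2 * R)) / (R ^ 2) ^ 2 +
      (0 * R - 2 * 1) / R ^ 2 =
      -2 / (R ^ 2 * (1 - R ^ 2)) - 2 * lg R / R ^ 3 - 2 / R ^ 2 := by
    field_simp
    ring
  rw [heq] at this
  exact this

lemma hasDerivAt_u2 {R : ℝ} (h0 : 0 < R) (h1 : R < 1) :
    HasDerivAt u2 ((R ^ 2 - 9) * lg R / (2 * R ^ 4)
      - (3 - R ^ 2) / (R ^ 3 * (1 - R ^ 2)) - 6 / R ^ 3) R := by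
  have e1 : R ≠ 0 := h0.ne'
  have e3 : (1:ℝ) - R ^ 2 ≠ 0 := by nlinarith
  have hp2 : HasDerivAt (fun r : ℝ => r ^ 2) (2 * R) R := by
    simpa using hasDerivAt_pow 2 R
  have hp3 : HasDerivAt (fun r : ℝ => 2 * r ^ 3) (2 * (3 * R ^ 2)) R := by
    simpa using (hasDerivAt_pow 3 R).const_mul 2
  have hnum : HasDerivAt (fun r : ℝ => 3 - r ^ 2) (-(2 * R)) R := hp2.const_sub 3
  have hq := hnum.div hp3 (by positivity : (2 * R ^ 3 : ℝ) ≠ 0)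
  have hm := hq.mul (hasDerivAt_lg h0 h1)
  have hc := (hasDerivAt_const R (3:ℝ)).div hp2 (pow_ne_zero 2 e1)
  have := hm.add hc
  have heq : (-(2 * R) * (2 * R ^ 3) - (3 - R ^ 2) * (2 * (3 * R ^ 2))) / (2 * R ^ 3) ^ 2 * lg R
      + (3 - R ^ 2) / (2 * R ^ 3) * (-2 / (1 - R ^ 2))
      + (0 * R ^ 2 - 3 * (2 * R)) / (R ^ 2) ^ 2 =
      (R ^ 2 - 9) * lg R / (2 * R ^ 4)
      - (3 - R ^ 2) / (R ^ 3 * (1 - R ^ 2)) - 6 / R ^ 3 := by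
    field_simp
    ring
  rw [← heq]
  exact this

/-- The explicit spherical-harmonic mode solutions `u₀, u₁, u₂` are smooth on `(0,1)` and
satisfy `d/dR [R²(1-R²) u_ℓ'(R)] = (ℓ(ℓ+1) + 2R²) u_ℓ(R)` for `ℓ = 0, 1, 2`. -/
theorem mode_solutions_ODE :
    ContDiffOn ℝ (⊤ : ℕ∞) u0 (Set.Ioo 0 1) ∧
    ContDiffOn ℝ (⊤ : ℕ∞) u1 (Set.Ioo 0 1) ∧
    ContDiffOn ℝ (⊤ : ℕ∞) u2 (Set.Ioo 0 1) ∧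
    ∀ R ∈ Set.Ioo (0 : ℝ) 1,
      deriv (fun r => r ^ 2 * (1 - r ^ 2) * deriv u0 r) R =
        (0 * (0 + 1) + 2 * R ^ 2) * u0 R ∧
      deriv (fun r => r ^ 2 * (1 - r ^ 2) * deriv u1 r) R =
        (1 * (1 + 1) + 2 * R ^ 2) * u1 R ∧
      deriv (fun r => r ^ 2 * (1 - r ^ 2) * deriv u2 r) R =
        (2 * (2 + 1) + 2 * R ^ 2) * u2 R := by
  have hlog : ContDiffOn ℝ (⊤ : ℕ∞) (fun r : ℝ => Real.log ((1 - r) / (1 + r)))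
      (Set.Ioo 0 1) := by
    apply ContDiffOn.log
    · exact ((contDiff_const.sub contDiff_id).contDiffOn).div
        ((contDiff_const.add contDiff_id).contDiffOn)
        (fun x hx => by have := hx.1; have := hx.2; positivity)
    · intro x hx
      have h1 : (0:ℝ) < 1 - x := by linarith [hx.2]
      have h2 : (0:ℝ) < 1 + x := by linarith [hx.1]
      positivity
  have hid : ContDiffOn ℝ (⊤ : ℕ∞) (fun r : ℝ => r) (Set.Ioo 0 1) :=
    contDiff_id.contDiffOn
  have hne : ∀ x ∈ Set.Ioo (0:ℝ) 1, x ≠ 0 := fun x hx => hx.1.ne'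
  have hc0 : ContDiffOn ℝ (⊤ : ℕ∞) u0 (Set.Ioo 0 1) := hlog.div hid hne
  have hc1 : ContDiffOn ℝ (⊤ : ℕ∞) u1 (Set.Ioo 0 1) := by
    apply ContDiffOn.add
    · exact hlog.div ((contDiff_id.pow 2).contDiffOn)
        (fun x hx => pow_ne_zero 2 (hne x hx))
    · exact contDiffOn_const.div hid hne
  have hc2 : ContDiffOn ℝ (⊤ : ℕ∞) u2 (Set.Ioo 0 1) := by
    apply ContDiffOn.add
    · apply ContDiffOn.mul
      · exact ((contDiff_const.sub (contDiff_id.pow 2)).contDiffOn).div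
          ((contDiff_const.mul (contDiff_id.pow 3)).contDiffOn)
          (fun x hx => by have := hx.1; positivity)
      · exact hlog
    · exact contDiffOn_const.div ((contDiff_id.pow 2).contDiffOn)
        (fun x hx => pow_ne_zero 2 (hne x hx))
  refine ⟨hc0, hc1, hc2, fun R hR => ?_⟩
  obtain ⟨h0, h1⟩ := hR
  have e1 : R ≠ 0 := h0.ne'
  have e3 : (1:ℝ) - R ^ 2 ≠ 0 := by nlinarith
  have hmem : Set.Ioo (0:ℝ) 1 ∈ nhds R := isOpen_Ioo.mem_nhds ⟨h0, h1⟩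
  refine ⟨?_, ?_, ?_⟩
  · have hEq : (fun r => r ^ 2 * (1 - r ^ 2) * deriv u0 r) =ᶠ[nhds R] phi0 := by
      filter_upwards [hmem] with r hr
      have er1 : r ≠ 0 := hr.1.ne'
      have er3 : (1:ℝ) - r ^ 2 ≠ 0 := by nlinarith [hr.1, hr.2]
      rw [(hasDerivAt_u0 hr.1 hr.2).deriv]
      unfold phi0
      field_simp
    have hd : HasDerivAt phi0 (-2 - (-(2 * R) * lg R + (1 - R ^ 2) * (-2 / (1 - R ^ 2)))) R := by
      have hp : HasDerivAt (fun r : ℝ => 1 - r ^ 2) (-(2 * R)) R := by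
        simpa using (hasDerivAt_pow 2 R).const_sub 1
      have ha : HasDerivAt (fun r : ℝ => -2 * r) (-2) R := by
        simpa using (hasDerivAt_id'' R).const_mul (-2 : ℝ)
      exact ha.sub (hp.mul (hasDerivAt_lg h0 h1))
    rw [hEq.deriv_eq, hd.deriv]
    unfold u0 lg
    field_simp
    ring
  · have hEq : (fun r => r ^ 2 * (1 - r ^ 2) * deriv u1 r) =ᶠ[nhds R] phi1 := by
      filter_upwards [hmem] with r hr
      have er1 : r ≠ 0 := hr.1.ne'
      have er3 : (1:ℝ) - r ^ 2 ≠ 0 := by nlinarith [hr.1, hr.2]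
      rw [(hasDerivAt_u1 hr.1 hr.2).deriv]
      unfold phi1
      field_simp
      ring
    have hd : HasDerivAt phi1
        (2 * (2 * R) - 0 -
          ((-(2 * R) * lg R + (1 - R ^ 2) * (-2 / (1 - R ^ 2))) * R
            - (1 - R ^ 2) * lg R * 1) / R ^ 2 * 2) R := by
      have hp : HasDerivAt (fun r : ℝ => 1 - r ^ 2) (-(2 * R)) R := by
        simpa using (hasDerivAt_pow 2 R).const_sub 1
      have ha : HasDerivAt (fun r : ℝ => 2 * r ^ 2) (2 * (2 * R)) R := by
        simpa using (hasDerivAt_pow 2 R).const_mul 2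
      have hb : HasDerivAt (fun r : ℝ => 2 * r ^ 2 - 4) (2 * (2 * R) - 0) R :=
        ha.sub (hasDerivAt_const R 4)
      have hm := (hp.mul (hasDerivAt_lg h0 h1)).div (hasDerivAt_id'' R) e1
      have hfull := hb.sub (hm.const_mul 2)
      have : HasDerivAt phi1
          (2 * (2 * R) - 0 -
            2 * (((-(2 * R) * lg R + (1 - R ^ 2) * (-2 / (1 - R ^ 2))) * R
              - (1 - R ^ 2) * lg R * 1) / R ^ 2)) R := by
        unfold phi1
        rw [show (fun r : ℝ => 2 * r ^ 2 - 4 - 2 * (1 - r ^ 2) * lg r / r) =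
            ((fun r : ℝ => 2 * r ^ 2 - 4) - fun y : ℝ => 2 * (((fun r : ℝ => 1 - r ^ 2) * lg / fun y : ℝ => y) : ℝ → ℝ) y) from by
          funext r
          simp only [Pi.mul_apply, Pi.div_apply, Pi.sub_apply]
          ring]
        exact hfull
      convert this using 1
      ring
    rw [hEq.deriv_eq, hd.deriv]
    unfold u1 lg
    field_simp
    ring
  · have hEq : (fun r => r ^ 2 * (1 - r ^ 2) * deriv u2 r) =ᶠ[nhds R] phi2 := by
      filter_upwards [hmem] with r hr
      have er1 : r ≠ 0 := hr.1.ne'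
      have er3 : (1:ℝ) - r ^ 2 ≠ 0 := by nlinarith [hr.1, hr.2]
      rw [(hasDerivAt_u2 hr.1 hr.2).deriv]
      unfold phi2
      field_simp
      ring
    have hp1 : HasDerivAt (fun r : ℝ => 1 - r ^ 2) (-(2 * R)) R := by
      simpa using (hasDerivAt_pow 2 R).const_sub 1
    have hp2 : HasDerivAt (fun r : ℝ => r ^ 2 - 9) (2 * R) R := by
      simpa using (hasDerivAt_pow 2 R).sub_const 9
    have hp3 : HasDerivAt (fun r : ℝ => 2 * r ^ 2) (2 * (2 * R)) R := by
      simpa using (hasDerivAt_pow 2 R).const_mul 2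
    have hp4 : HasDerivAt (fun r : ℝ => 7 * r ^ 2 - 9) (7 * (2 * R)) R := by
      simpa using ((hasDerivAt_pow 2 R).const_mul 7).sub_const 9
    have hA := (hp1.mul hp2).mul (hasDerivAt_lg h0 h1)
    have hB := hA.div hp3 (by positivity : (2 * R ^ 2 : ℝ) ≠ 0)
    have hC := hp4.div (hasDerivAt_id'' R) e1
    have hd := hB.add hC
    rw [hEq.deriv_eq]
    unfold phi2
    have hd' : HasDerivAt (fun r => (1 - r ^ 2) * (r ^ 2 - 9) * lg r / (2 * r ^ 2) + (7 * r ^ 2 - 9) / r) _ R := hd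
    rw [hd'.deriv]
    simp only [Pi.mul_apply]
    unfold u2 lg
    field_simp
    ring
end
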